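/- arXiv:2411.09832 — 2 statements merged into one kernel-verified Lean document; each statement's English description precedes it below -/
import Mathlib

section
/- Let 𝕀 be an interval hypergraph on [n] that is closed under intersection. Then the orientation sending each I ∈ 𝕀 to max(I) is acyclic, is the greatest element of the hypergraphic poset P_𝕀, and equals the least upper bound in P_𝕀 of the family {A_j : j ∈ 𝒥_𝕀}. -/
namespace IHL

/-- The hyperedges of a hypergraph, as a subtype. -/
abbrev Edge (𝕀 : Finset (Finset ℕ)) : Type := {H : Finset ℕ // H ∈ 𝕀}

/-- `ℋ` is a hypergraph on `[n] = {1,…,n}`: hyperedges are nonempty subsets of `[n]`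
and all singletons belong to `ℋ`. -/
def IsHypergraph (n : ℕ) (ℋ : Finset (Finset ℕ)) : Prop :=
  (∀ H ∈ ℋ, H.Nonempty ∧ H ⊆ Finset.Icc 1 n) ∧
    ∀ i, 1 ≤ i → i ≤ n → ({i} : Finset ℕ) ∈ ℋ

/-- `𝕀` is an interval hypergraph on `[n]`: hyperedges are intervals `[a,b] ⊆ [n]`
and all singletons belong to `𝕀`. -/
def IsIntervalHypergraph (n : ℕ) (𝕀 : Finset (Finset ℕ)) : Prop :=
  (∀ H ∈ 𝕀, ∃ a b, 1 ≤ a ∧ a ≤ b ∧ b ≤ n ∧ H = Finset.Icc a b) ∧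
    ∀ i, 1 ≤ i → i ≤ n → ({i} : Finset ℕ) ∈ 𝕀

/-- An orientation assigns to each hyperedge one of its elements. -/
def IsOrientation (𝕀 : Finset (Finset ℕ)) (O : Edge 𝕀 → ℕ) : Prop :=
  ∀ H : Edge 𝕀, O H ∈ H.1

/-- Acyclicity: there is no cyclic sequence `H_0, …, H_k` with `k ≥ 2`, `H_k = H_0`, and
`O (H (p+1)) ∈ H p \ {O (H p)}` for all `p < k`. -/
def IsAcyclic (𝕀 : Finset (Finset ℕ)) (O : Edge 𝕀 → ℕ) : Prop :=
  ¬∃ (k : ℕ) (H : ℕ → Edge 𝕀), 2 ≤ k ∧ H k = H 0 ∧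
    ∀ p < k, O (H (p + 1)) ∈ (H p).1 ∧ O (H (p + 1)) ≠ O (H p)

/-- An acyclic orientation, i.e. an element of the hypergraphic poset. -/
def AcycOr (𝕀 : Finset (Finset ℕ)) (O : Edge 𝕀 → ℕ) : Prop :=
  IsOrientation 𝕀 O ∧ IsAcyclic 𝕀 O

/-- Increasing flip from `O` to `O'` flipping `i` to `j`. -/
def IsIncFlip (n : ℕ) (𝕀 : Finset (Finset ℕ)) (i j : ℕ) (O O' : Edge 𝕀 → ℕ) : Prop :=
  O ≠ O' ∧ 1 ≤ i ∧ i < j ∧ j ≤ n ∧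
    ∀ H : Edge 𝕀,
      (O H ≠ O' H → O H = i ∧ O' H = j) ∧
      (i ∈ H.1 → j ∈ H.1 → (O H = i ↔ O' H = j))

/-- One increasing flip step between acyclic orientations. -/
def FlipStep (n : ℕ) (𝕀 : Finset (Finset ℕ)) (O O' : Edge 𝕀 → ℕ) : Prop :=
  AcycOr 𝕀 O ∧ AcycOr 𝕀 O' ∧ ∃ i j, IsIncFlip n 𝕀 i j O O'

/-- The order of the hypergraphic poset `P_𝕀`: reflexive-transitive closure of
the increasing flip relation on acyclic orientations. -/
def leP (n : ℕ) (𝕀 : Finset (Finset ℕ)) : (Edge 𝕀 → ℕ) → (Edge 𝕀 → ℕ) → Prop :=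
  Relation.ReflTransGen (FlipStep n 𝕀)

/-- Strict order of the hypergraphic poset. -/
def ltP (n : ℕ) (𝕀 : Finset (Finset ℕ)) (A B : Edge 𝕀 → ℕ) : Prop :=
  leP n 𝕀 A B ∧ A ≠ B

/-- `B` covers `A` in `P_𝕀`. -/
def CoversP (n : ℕ) (𝕀 : Finset (Finset ℕ)) (A B : Edge 𝕀 → ℕ) : Prop :=
  ltP n 𝕀 A B ∧ ¬∃ C, AcycOr 𝕀 C ∧ ltP n 𝕀 A C ∧ ltP n 𝕀 C B

/-- `𝕀` is closed under intersection. -/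
def ClosedUnderIntersection (𝕀 : Finset (Finset ℕ)) : Prop :=
  ∀ I ∈ 𝕀, ∀ J ∈ 𝕀, (I ∩ J).Nonempty → I ∩ J ∈ 𝕀

/-- `π` is a permutation of `[n]` (it fixes everything outside `[1,n]`). -/
def IsPermOn (n : ℕ) (π : Equiv.Perm ℕ) : Prop :=
  ∀ x, x ∉ Finset.Icc 1 n → π x = x

/-- The surjection `Or` from permutations to acyclic orientations:
`Or_π (H) = π (min {p : π p ∈ H})`. -/
noncomputable def orMap (𝕀 : Finset (Finset ℕ)) (π : Equiv.Perm ℕ) : Edge 𝕀 → ℕ :=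
  fun H => π (sInf {p | π p ∈ H.1})

/-- The weak order on permutations of `[n]`, via inclusion of inversion sets. -/
def weakLe (n : ℕ) (σ τ : Equiv.Perm ℕ) : Prop :=
  ∀ a b, 1 ≤ a → a < b → b ≤ n → σ.symm b < σ.symm a → τ.symm b < τ.symm a

/-- `π` contains the pattern 231. -/
def Contains231 (n : ℕ) (π : Equiv.Perm ℕ) : Prop :=
  ∃ p q r, 1 ≤ p ∧ p < q ∧ q < r ∧ r ≤ n ∧ π r < π p ∧ π p < π q

/-- `π` contains the pattern 213. -/
def Contains213 (n : ℕ) (π : Equiv.Perm ℕ) : Prop :=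
  ∃ p q r, 1 ≤ p ∧ p < q ∧ q < r ∧ r ≤ n ∧ π q < π p ∧ π p < π r

/-- The partial order `≺_A`: transitive closure of `A H ≺ h` for `h ∈ H \ {A H}`. -/
def prec (𝕀 : Finset (Finset ℕ)) (A : Edge 𝕀 → ℕ) : ℕ → ℕ → Prop :=
  Relation.TransGen fun a b => ∃ H : Edge 𝕀, A H = a ∧ b ∈ H.1 ∧ b ≠ a

/-- The distributivity condition on interval hypergraphs: for all `I, J ∈ 𝕀` with
`I ⊈ J`, `J ⊈ I` and `I ∩ J ≠ ∅`, the intersection `I ∩ J` is in `𝕀` and is initial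
or final in any `K ∈ 𝕀` containing it. -/
def IsDistribHG (𝕀 : Finset (Finset ℕ)) : Prop :=
  ∀ I ∈ 𝕀, ∀ J ∈ 𝕀, ¬I ⊆ J → ¬J ⊆ I → (I ∩ J).Nonempty →
    (I ∩ J ∈ 𝕀 ∧ ∀ K ∈ 𝕀, I ∩ J ⊆ K → ((I ∩ J).min = K.min ∨ (I ∩ J).max = K.max))

/-- `j ∈ 𝒥_𝕀 = ⋃_{I ∈ 𝕀} (I \ {min I})`. -/
def InJI (𝕀 : Finset (Finset ℕ)) (j : ℕ) : Prop :=
  ∃ I ∈ 𝕀, j ∈ I ∧ ∃ y ∈ I, y < j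

/-- `Jj` is the interval `J_j = ⋂ {I ∈ 𝕀 : j ∈ I \ {min I}}`. -/
def IsJj (𝕀 : Finset (Finset ℕ)) (j : ℕ) (Jj : Finset ℕ) : Prop :=
  ∀ x, x ∈ Jj ↔ ∀ I ∈ 𝕀, j ∈ I → (∃ y ∈ I, y < j) → x ∈ I

/-- `Aj` is the orientation `A_j` (where `μj = min J_j`):
`A_j (J) = j` if `j ∈ J` and `min J = μ_j`, and `A_j (J) = min J` otherwise. -/
def IsAj (𝕀 : Finset (Finset ℕ)) (j μj : ℕ) (Aj : Edge 𝕀 → ℕ) : Prop :=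
  ∀ J : Edge 𝕀,
    (j ∈ J.1 ∧ IsLeast (J.1 : Set ℕ) μj → Aj J = j) ∧
    (¬(j ∈ J.1 ∧ IsLeast (J.1 : Set ℕ) μj) → IsLeast (J.1 : Set ℕ) (Aj J))

/-- `Jij` is the interval `J_{ij} = ⋂ {I ∈ 𝕀 : {i,j} ⊆ I}`. -/
def IsJij (𝕀 : Finset (Finset ℕ)) (i j : ℕ) (Jij : Finset ℕ) : Prop :=
  ∀ x, x ∈ Jij ↔ ∀ I ∈ 𝕀, i ∈ I → j ∈ I → x ∈ I

/-- `(i,j) ∈ ℐ𝒥_𝕀`, where `μij = min J_{ij}`: both lie in a common hyperedge and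
`i = max ([μ_{ij}, j) \ ⋃ {J \ {min J} : J ∈ 𝕀, J ⊆ [μ_{ij}, j)})`. -/
def InIJ (n : ℕ) (𝕀 : Finset (Finset ℕ)) (i j μij : ℕ) : Prop :=
  1 ≤ i ∧ i < j ∧ j ≤ n ∧ (∃ I ∈ 𝕀, i ∈ I ∧ j ∈ I) ∧
    IsGreatest {m | μij ≤ m ∧ m < j ∧
      ∀ J ∈ 𝕀, (∀ x ∈ J, μij ≤ x ∧ x < j) → m ∈ J → ∀ y ∈ J, m ≤ y} i

/-- `Aij` is the orientation `A_{ij}` (where `μij = min J_{ij}`):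
`A_{ij} (J) = j` if `j ∈ J` and `min J ≥ μ_{ij}`, and `A_{ij} (J) = min J` otherwise. -/
def IsAij (𝕀 : Finset (Finset ℕ)) (j μij : ℕ) (Aij : Edge 𝕀 → ℕ) : Prop :=
  ∀ J : Edge 𝕀,
    (j ∈ J.1 ∧ (∀ x ∈ J.1, μij ≤ x) → Aij J = j) ∧
    (¬(j ∈ J.1 ∧ (∀ x ∈ J.1, μij ≤ x)) → IsLeast (J.1 : Set ℕ) (Aij J))

/-- The reversal `x ↦ n - x + 1` on `[n]`. -/
def revPt (n x : ℕ) : ℕ := n - x + 1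

/-- The reversed hypergraph `ℋ↔`. -/
def revHG (n : ℕ) (ℋ : Finset (Finset ℕ)) : Finset (Finset ℕ) :=
  ℋ.image fun H => H.image (revPt n)

/-- step relation -/
def Rel (𝕀 : Finset (Finset ℕ)) (O : Edge 𝕀 → ℕ) (a b : ℕ) : Prop :=
  ∃ H : Edge 𝕀, O H = a ∧ b ∈ H.1 ∧ b ≠ a

lemma chain_lt {g : ℕ → ℕ} {k : ℕ} (h : ∀ p < k, g p < g (p + 1)) :
    ∀ p ≤ k, g 0 + p ≤ g p := by
  intro p hp
  induction p with
  | zero => simp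
  | succ q ih =>
    have h1 := h q (by omega)
    have h2 := ih (by omega)
    omega

lemma transGen_chain {α : Type*} {r : α → α → Prop} {a b : α} (h : Relation.TransGen r a b) :
    ∃ m, ∃ f : ℕ → α, 1 ≤ m ∧ f 0 = a ∧ f m = b ∧ ∀ p < m, r (f p) (f (p + 1)) := by
  induction h with
  | @single c hr =>
    refine ⟨1, fun p => if p = 0 then a else c, le_refl 1, by simp, by simp, ?_⟩
    intro p hp
    have : p = 0 := by omega
    subst this; simpa using hr
  | @tail c d hac hcd ih =>
    obtain ⟨m, f, hm, hf0, hfm, hstep⟩ := ih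
    refine ⟨m + 1, fun p => if p ≤ m then f p else d, by omega, by simp [hf0], by simp, ?_⟩
    intro p hp
    by_cases hpm : p < m
    · simpa [show p ≤ m by omega, show p + 1 ≤ m by omega] using hstep p hpm
    · have : p = m := by omega
      subst this
      simpa [hfm] using hcd

lemma no_transGen_cycle {𝕀 : Finset (Finset ℕ)} {O : Edge 𝕀 → ℕ} (hac : IsAcyclic 𝕀 O)
    (a : ℕ) : ¬ Relation.TransGen (Rel 𝕀 O) a a := by
  intro h
  obtain ⟨m, f, hm, hf0, hfm, hstep⟩ := transGen_chain h
  have hex : ∀ p, p < m → ∃ H : Edge 𝕀, O H = f p ∧ f (p + 1) ∈ H.1 ∧ f (p + 1) ≠ f p := by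
    intro p hp; exact hstep p hp
  classical
  choose g hg1 hg2 hg3 using hex
  rcases eq_or_lt_of_le hm with hm1 | hm2
  · -- m = 1 : r a a, contradiction
    have := hstep 0 (by omega)
    rw [hf0] at this
    have h1 : f 1 = a := by rw [← hm1] at hfm; exact hfm
    rw [h1] at this
    obtain ⟨H, _, _, hne⟩ := this
    exact hne rfl
  · -- m ≥ 2
    apply hac
    have hmpos : 0 < m := by omega
    refine ⟨m, fun p => g (p % m) (Nat.mod_lt _ hmpos), hm2, by simp, ?_⟩
    intro p hp
    have hpm : p % m = p := Nat.mod_eq_of_lt hp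
    by_cases hp1 : p + 1 < m
    · have h1 : (p + 1) % m = p + 1 := Nat.mod_eq_of_lt hp1
      constructor
      · simp only [h1, hpm]
        rw [hg1]
        exact hg2 p hp
      · simp only [h1, hpm]
        rw [hg1, hg1]
        exact hg3 p hp
    · have hpm1 : p + 1 = m := by omega
      have h1 : (p + 1) % m = 0 := by rw [hpm1]; exact Nat.mod_self m
      have hf00 : f 0 = f m := by rw [hf0, hfm]
      have h2' := hg2 p hp
      have h3' := hg3 p hp
      rw [hpm1, hfm, ← hf0] at h2' h3'
      constructor
      · simp only [h1, hpm]
        rw [hg1]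
        exact h2'
      · simp only [h1, hpm]
        rw [hg1, hg1]
        exact h3'

lemma two_cycle {𝕀 : Finset (Finset ℕ)} {O : Edge 𝕀 → ℕ} (hac : IsAcyclic 𝕀 O) {H K : Edge 𝕀}
    (h1 : O K ∈ H.1) (h2 : O K ≠ O H) (h3 : O H ∈ K.1) : False := by
  apply hac
  refine ⟨2, fun p => if p % 2 = 0 then H else K, le_refl 2, by norm_num, ?_⟩
  intro p hp
  have : p = 0 ∨ p = 1 := by omega
  rcases this with rfl | rfl
  · norm_num
    exact ⟨h1, h2⟩
  · norm_num
    exact ⟨h3, h2.symm⟩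

lemma exists_min_rel {s : ℕ → ℕ → Prop} (htr : Transitive s) (hir : ∀ a, ¬ s a a) :
    ∀ (V : Finset ℕ), V.Nonempty → ∃ x ∈ V, ∀ y ∈ V, ¬ s y x := by
  classical
  intro V
  induction V using Finset.strongInduction with
  | _ V ih =>
    intro hV
    obtain ⟨x, hx⟩ := hV
    by_cases h : ∃ y ∈ V, s y x
    · set W := V.filter (fun y => s y x) with hW
      have hxW : x ∉ W := by
        simp only [hW, Finset.mem_filter]
        rintro ⟨-, hs⟩
        exact hir x hs
      have hWV : W ⊂ V := by
        refine ⟨Finset.filter_subset _ _, fun hsub => hxW (hsub hx)⟩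
      have hWne : W.Nonempty := by
        obtain ⟨y, hy, hs⟩ := h
        exact ⟨y, by simp [hW, Finset.mem_filter, hy, hs]⟩
      obtain ⟨x', hx'W, hmin⟩ := ih W hWV hWne
      refine ⟨x', (Finset.filter_subset _ _) hx'W, ?_⟩
      intro y hy hs
      have hx'x : s x' x := (Finset.mem_filter.mp hx'W).2
      have : y ∈ W := Finset.mem_filter.mpr ⟨hy, htr hs hx'x⟩
      exact hmin y this hs
    · exact ⟨x, hx, fun y hy hs => h ⟨y, hy, hs⟩⟩

lemma exists_topo {s : ℕ → ℕ → Prop} (htr : Transitive s) (hir : ∀ a, ¬ s a a) :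
    ∀ (m : ℕ) (V : Finset ℕ), V.card ≤ m →
      ∃ l : List ℕ, l.Nodup ∧ (∀ x, x ∈ l ↔ x ∈ V) ∧
        ∀ u x v, l = u ++ x :: v → ∀ y ∈ v, ¬ s y x := by
  intro m
  induction m with
  | zero =>
    intro V hV
    have : V = ∅ := Finset.card_eq_zero.mp (by omega)
    subst this
    exact ⟨[], by simp, by simp, by intro u x v h; simp at h⟩
  | succ m ih =>
    intro V hV
    rcases V.eq_empty_or_nonempty with rfl | hne
    · exact ⟨[], by simp, by simp, by intro u x v h; simp at h⟩
    · obtain ⟨x, hxV, hmin⟩ := exists_min_rel htr hir V hne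
      have hcard : (V.erase x).card ≤ m := by
        have := Finset.card_erase_of_mem hxV
        omega
      obtain ⟨l', hnd, hmem, hsplit⟩ := ih (V.erase x) hcard
      refine ⟨x :: l', ?_, ?_, ?_⟩
      · refine List.nodup_cons.mpr ⟨?_, hnd⟩
        intro hxl
        exact (Finset.notMem_erase x V) ((hmem x).mp hxl)
      · intro y
        simp only [List.mem_cons, hmem, Finset.mem_erase]
        constructor
        · rintro (rfl | ⟨-, h⟩)
          · exact hxV
          · exact h
        · intro hy
          by_cases hyx : y = x
          · exact Or.inl hyx
          · exact Or.inr ⟨hyx, hy⟩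
      · intro u x₀ v h y hy
        cases u with
        | nil =>
          simp only [List.nil_append, List.cons.injEq] at h
          obtain ⟨rfl, rfl⟩ := h
          have : y ∈ V := Finset.mem_of_mem_erase ((hmem y).mp hy)
          exact hmin y this
        | cons z u' =>
          simp only [List.cons_append, List.cons.injEq] at h
          exact hsplit u' x₀ v h.2 y hy

lemma find?_split {P : ℕ → Bool} :
    ∀ {l : List ℕ} {x y : ℕ}, l.find? P = some x → y ∈ l → P y → y ≠ x →
      ∃ u v, l = u ++ x :: v ∧ y ∈ v := by
  intro l
  induction l with
  | nil => intro x y h; simp at h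
  | cons h t ih =>
    intro x y hf hy hPy hyx
    by_cases hPh : P h
    · rw [List.find?_cons_of_pos hPh] at hf
      obtain rfl : h = x := by simpa using hf
      refine ⟨[], t, by simp, ?_⟩
      rcases List.mem_cons.mp hy with rfl | hyt
      · exact absurd rfl hyx
      · exact hyt
    · rw [List.find?_cons_of_neg hPh] at hf
      have hyh : y ≠ h := by rintro rfl; rw [hPy] at hPh; exact hPh rfl
      have hyt : y ∈ t := by rcases List.mem_cons.mp hy with rfl | h'; exact absurd rfl hyh; exact h'
      obtain ⟨u, v, rfl, hyv⟩ := ih hf hyt hPy hyx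
      exact ⟨h :: u, v, by simp, hyv⟩

lemma find?_exists {P : ℕ → Bool} {l : List ℕ} {y : ℕ} (hy : y ∈ l) (hPy : P y) :
    ∃ x, l.find? P = some x := by
  have : (l.find? P).isSome = true := List.find?_isSome.mpr ⟨y, hy, hPy⟩
  exact Option.isSome_iff_exists.mp this

lemma find?_idx {P : ℕ → Bool} :
    ∀ {l : List ℕ} {x y : ℕ}, l.find? P = some x → y ∈ l → P y → y ≠ x →
      l.idxOf x < l.idxOf y := by
  intro l
  induction l with
  | nil => intro x y h; simp at h
  | cons h t ih =>
    intro x y hf hy hPy hyx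
    by_cases hPh : P h
    · rw [List.find?_cons_of_pos hPh] at hf
      obtain rfl : h = x := by simpa using hf
      rw [List.idxOf_cons_self]
      rw [List.idxOf_cons_ne _ (Ne.symm hyx)]
      omega
    · rw [List.find?_cons_of_neg hPh] at hf
      have hxh : x ≠ h := by
        rintro rfl
        exact hPh (List.find?_some hf)
      have hyh : y ≠ h := by rintro rfl; rw [hPy] at hPh; exact hPh rfl
      have hyt : y ∈ t := by rcases List.mem_cons.mp hy with rfl | h'; exact absurd rfl hyh; exact h'
      rw [List.idxOf_cons_ne _ (Ne.symm hxh), List.idxOf_cons_ne _ (Ne.symm hyh)]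
      have := ih hf hyt hPy hyx
      omega


noncomputable def OfL (𝕀 : Finset (Finset ℕ)) (l : List ℕ) : Edge 𝕀 → ℕ :=
  fun H => (l.find? (fun x => decide (x ∈ H.1))).getD 0

lemma OfL_find {𝕀 : Finset (Finset ℕ)} {l : List ℕ} (H : Edge 𝕀)
    (hfull : ∃ y ∈ l, y ∈ H.1) :
    l.find? (fun x => decide (x ∈ H.1)) = some (OfL 𝕀 l H) := by
  obtain ⟨y, hy, hyH⟩ := hfull
  obtain ⟨x, hx⟩ := find?_exists (P := fun x => decide (x ∈ H.1)) hy (by simpa using hyH)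
  simp [OfL, hx]

lemma OfL_mem {𝕀 : Finset (Finset ℕ)} {l : List ℕ} (H : Edge 𝕀)
    (hfull : ∃ y ∈ l, y ∈ H.1) : OfL 𝕀 l H ∈ H.1 := by
  have := List.find?_some (OfL_find H hfull)
  simpa using this

lemma OfL_acyclic {𝕀 : Finset (Finset ℕ)} {l : List ℕ}
    (hfull : ∀ H : Edge 𝕀, ∃ y ∈ l, y ∈ H.1) : IsAcyclic 𝕀 (OfL 𝕀 l) := by
  rintro ⟨k, H, hk, hH0, hstep⟩
  have hlt : ∀ p < k, l.idxOf (OfL 𝕀 l (H p)) < l.idxOf (OfL 𝕀 l (H (p + 1))) := by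
    intro p hp
    obtain ⟨hmem, hne⟩ := hstep p hp
    exact find?_idx (OfL_find (H p) (hfull _))
      (List.mem_of_find?_eq_some (OfL_find (H (p + 1)) (hfull _))) (by simpa using hmem) hne
  have := chain_lt hlt k le_rfl
  rw [hH0] at this
  omega

lemma OfL_eq_of_topo {𝕀 : Finset (Finset ℕ)} {B : Edge 𝕀 → ℕ} {l : List ℕ}
    (hB : ∀ H : Edge 𝕀, B H ∈ H.1) (hmem : ∀ H : Edge 𝕀, B H ∈ l)
    (hfull : ∀ H : Edge 𝕀, ∃ y ∈ l, y ∈ H.1)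
    (hsplit : ∀ u x v, l = u ++ x :: v → ∀ y ∈ v, ¬ Relation.TransGen (Rel 𝕀 B) y x) :
    OfL 𝕀 l = B := by
  funext H
  by_contra hne
  obtain ⟨u, v, hl, hyv⟩ := find?_split (OfL_find H (hfull H)) (hmem H)
    (by simpa using hB H) (fun h => hne h.symm)
  exact hsplit u (OfL 𝕀 l H) v hl (B H) hyv
    (Relation.TransGen.single ⟨H, rfl, OfL_mem H (hfull H), hne⟩)

lemma OfL_sorted {𝕀 : Finset (Finset ℕ)} {l : List ℕ} (hpair : l.Pairwise (· > ·))
    (H : Edge 𝕀) (hfull : ∃ y ∈ l, y ∈ H.1) {t : ℕ} (hTl : t ∈ l) (htH : t ∈ H.1)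
    (hgr : ∀ y ∈ H.1, y ≤ t) : OfL 𝕀 l H = t := by
  by_contra hne
  obtain ⟨u, v, hl, hyv⟩ := find?_split (OfL_find H hfull) hTl (by simpa using htH)
    (fun h => hne h.symm)
  rw [hl] at hpair
  have h1 := (List.pairwise_append.mp hpair).2.1
  have h2 := (List.pairwise_cons.mp h1).1 t hyv
  have h3 := hgr _ (OfL_mem H hfull)
  omega

def asc : List ℕ → ℕ
  | [] => 0
  | x :: xs => xs.countP (fun y => decide (x < y)) + asc xs

lemma asc_swap {i j : ℕ} (hij : i < j) (v : List ℕ) :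
    ∀ u : List ℕ, asc (u ++ j :: i :: v) + 1 = asc (u ++ i :: j :: v) := by
  intro u
  induction u with
  | nil =>
    simp only [List.nil_append, asc]
    rw [List.countP_cons, List.countP_cons]
    simp only [decide_eq_true_eq]
    rw [if_pos hij, if_neg (by omega : ¬ j < i)]
    omega
  | cons a u ih =>
    simp only [List.cons_append, asc, List.append_eq]
    have hperm : (u ++ j :: i :: v).Perm (u ++ i :: j :: v) :=
      List.Perm.append_left u (List.Perm.swap i j v)
    rw [List.Perm.countP_eq _ hperm]
    omega

lemma exists_ascent : ∀ {l : List ℕ}, ¬ l.Chain' (· > ·) →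
    ∃ u a b v, l = u ++ a :: b :: v ∧ ¬ a > b := by
  intro l
  induction l with
  | nil => intro h; exact absurd List.isChain_nil h
  | cons x xs ih =>
    intro h
    cases xs with
    | nil => exact absurd (List.isChain_singleton x) h
    | cons y ys =>
      by_cases hxy : x > y
      · have hc : ¬ (y :: ys).Chain' (· > ·) := fun hc => h (List.isChain_cons_cons.mpr ⟨hxy, hc⟩)
        obtain ⟨u, a, b, v, heq, hab⟩ := ih hc
        exact ⟨x :: u, a, b, v, by rw [heq]; simp, hab⟩
      · exact ⟨[], x, y, ys, by simp, hxy⟩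

lemma swap_spec {𝕀 : Finset (Finset ℕ)} {u v : List ℕ} {i j : ℕ}
    (hnd : (u ++ i :: j :: v).Nodup) (H : Edge 𝕀) :
    (OfL 𝕀 (u ++ i :: j :: v) H ≠ OfL 𝕀 (u ++ j :: i :: v) H →
      OfL 𝕀 (u ++ i :: j :: v) H = i ∧ OfL 𝕀 (u ++ j :: i :: v) H = j) ∧
    (i ∈ H.1 → j ∈ H.1 → (OfL 𝕀 (u ++ i :: j :: v) H = i ↔ OfL 𝕀 (u ++ j :: i :: v) H = j)) := by
  classical
  obtain ⟨hndu, hnd2, hdisj⟩ := List.nodup_append'.mp hnd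
  have hiu : i ∉ u := fun h => hdisj h (by simp)
  have hju : j ∉ u := fun h => hdisj h (by simp)
  have hij : i ≠ j := by
    have := List.nodup_cons.mp hnd2
    exact fun h => this.1 (h ▸ List.mem_cons_self)
  unfold OfL
  rw [List.find?_append, List.find?_append]
  rcases hu : u.find? (fun x => decide (x ∈ H.1)) with _ | z
  · simp only [Option.none_or]
    by_cases hi : i ∈ H.1 <;> by_cases hj : j ∈ H.1
    · rw [List.find?_cons_of_pos (by simpa using hi),
        List.find?_cons_of_pos (by simpa using hj)]
      simp [hij]
    · have e1 : List.find? (fun x => decide (x ∈ H.1)) (i :: j :: v) = some i :=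
        List.find?_cons_of_pos (by simpa using hi)
      have e2 : List.find? (fun x => decide (x ∈ H.1)) (j :: i :: v) = some i := by
        rw [List.find?_cons_of_neg (by simpa using hj)]
        exact List.find?_cons_of_pos (by simpa using hi)
      rw [e1, e2]
      simp [hj]
    · have e1 : List.find? (fun x => decide (x ∈ H.1)) (i :: j :: v) = some j := by
        rw [List.find?_cons_of_neg (by simpa using hi)]
        exact List.find?_cons_of_pos (by simpa using hj)
      have e2 : List.find? (fun x => decide (x ∈ H.1)) (j :: i :: v) = some j :=
        List.find?_cons_of_pos (by simpa using hj)
      rw [e1, e2]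
      simp [hi]
    · have e1 : List.find? (fun x => decide (x ∈ H.1)) (i :: j :: v)
          = List.find? (fun x => decide (x ∈ H.1)) v := by
        rw [List.find?_cons_of_neg (by simpa using hi),
          List.find?_cons_of_neg (by simpa using hj)]
      have e2 : List.find? (fun x => decide (x ∈ H.1)) (j :: i :: v)
          = List.find? (fun x => decide (x ∈ H.1)) v := by
        rw [List.find?_cons_of_neg (by simpa using hj),
          List.find?_cons_of_neg (by simpa using hi)]
      rw [e1, e2]
      simp [hi]
  · have hz : z ∈ u := List.mem_of_find?_eq_some hu
    have hzi : z ≠ i := fun h => hiu (h ▸ hz)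
    have hzj : z ≠ j := fun h => hju (h ▸ hz)
    have hre : ∀ w : Option ℕ, (some z).or w = some z := fun w => rfl
    rw [hre, hre]
    simp only [Option.getD_some]
    exact ⟨fun h => absurd rfl h, fun _ _ => ⟨fun h => absurd h hzi, fun h => absurd h hzj⟩⟩

section Main

variable {n : ℕ} {𝕀 : Finset (Finset ℕ)}

lemma edge_sub (h𝕀 : IsIntervalHypergraph n 𝕀) (H : Edge 𝕀) :
    H.1 ⊆ Finset.Icc 1 n ∧ H.1.Nonempty := by
  obtain ⟨a, b, h1, h2, h3, h4⟩ := h𝕀.1 H.1 H.2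
  constructor
  · intro x hx
    rw [h4, Finset.mem_Icc] at hx
    rw [Finset.mem_Icc]
    omega
  · exact ⟨a, by rw [h4, Finset.mem_Icc]; omega⟩

lemma reach (h𝕀 : IsIntervalHypergraph n 𝕀) (T : Edge 𝕀 → ℕ)
    (hT : ∀ H : Edge 𝕀, IsGreatest (H.1 : Set ℕ) (T H)) (N : ℕ) :
    ∀ l : List ℕ, asc l ≤ N → l.Nodup → (∀ x, x ∈ l ↔ x ∈ Finset.Icc 1 n) →
      leP n 𝕀 (OfL 𝕀 l) T := by
  induction N with
  | zero =>
    intro l hasc hnd hmem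
    have hfull : ∀ H : Edge 𝕀, ∃ y ∈ l, y ∈ H.1 := by
      intro H
      obtain ⟨hsub, y, hy⟩ := edge_sub h𝕀 H
      exact ⟨y, (hmem y).mpr (hsub hy), hy⟩
    by_cases hs : l.Chain' (· > ·)
    · have hpair : l.Pairwise (· > ·) := List.isChain_iff_pairwise.mp hs
      have hOT : OfL 𝕀 l = T := by
        funext H
        have h1 := hT H
        exact OfL_sorted hpair H (hfull H)
          ((hmem _).mpr ((edge_sub h𝕀 H).1 h1.1)) h1.1 (fun y hy => h1.2 hy)
      rw [hOT]
      exact Relation.ReflTransGen.refl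
    · obtain ⟨u, a, b, v, hl, hab⟩ := exists_ascent hs
      have hanb : a ≠ b := by
        rw [hl, List.nodup_append] at hnd
        have := List.nodup_cons.mp hnd.2.1
        exact fun h => this.1 (h ▸ List.mem_cons_self)
      have halt : a < b := by omega
      have := asc_swap halt v u
      rw [← hl] at this
      omega
  | succ N ih =>
    intro l hasc hnd hmem
    have hfull : ∀ H : Edge 𝕀, ∃ y ∈ l, y ∈ H.1 := by
      intro H
      obtain ⟨hsub, y, hy⟩ := edge_sub h𝕀 H
      exact ⟨y, (hmem y).mpr (hsub hy), hy⟩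
    by_cases hs : l.Chain' (· > ·)
    · have hpair : l.Pairwise (· > ·) := List.isChain_iff_pairwise.mp hs
      have hOT : OfL 𝕀 l = T := by
        funext H
        have h1 := hT H
        exact OfL_sorted hpair H (hfull H)
          ((hmem _).mpr ((edge_sub h𝕀 H).1 h1.1)) h1.1 (fun y hy => h1.2 hy)
      rw [hOT]
      exact Relation.ReflTransGen.refl
    · obtain ⟨u, a, b, v, hl, hab⟩ := exists_ascent hs
      subst hl
      have hanb : a ≠ b := by
        rw [List.nodup_append] at hnd
        have := List.nodup_cons.mp hnd.2.1
        exact fun h => this.1 (h ▸ List.mem_cons_self)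
      have halt : a < b := by omega
      set l' := u ++ b :: a :: v with hl'
      have hperm : (u ++ a :: b :: v).Perm l' :=
        List.Perm.append_left u (List.Perm.swap b a v)
      have hnd' : l'.Nodup := hperm.nodup_iff.mp hnd
      have hmem' : ∀ x, x ∈ l' ↔ x ∈ Finset.Icc 1 n := by
        intro x; rw [← hperm.mem_iff]; exact hmem x
      have hfull' : ∀ H : Edge 𝕀, ∃ y ∈ l', y ∈ H.1 := by
        intro H
        obtain ⟨y, hy, hyH⟩ := hfull H
        exact ⟨y, hperm.mem_iff.mp hy, hyH⟩
      have hasc' : asc l' ≤ N := by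
        have := asc_swap halt v u
        rw [← hl'] at this
        omega
      have hle' := ih l' hasc' hnd' hmem'
      by_cases heq : OfL 𝕀 (u ++ a :: b :: v) = OfL 𝕀 l'
      · rw [heq]; exact hle'
      · refine Relation.ReflTransGen.head ?_ hle'
        have hmemIcc : ∀ x ∈ u ++ a :: b :: v, 1 ≤ x ∧ x ≤ n := by
          intro x hx
          have := (hmem x).mp hx
          rw [Finset.mem_Icc] at this
          exact this
        refine ⟨⟨fun H => OfL_mem H (hfull H), OfL_acyclic hfull⟩,
          ⟨fun H => OfL_mem H (hfull' H), OfL_acyclic hfull'⟩, a, b, heq, ?_, halt, ?_, ?_⟩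
        · exact (hmemIcc a (by simp)).1
        · exact (hmemIcc b (by simp)).2
        · intro H
          exact swap_spec hnd H

lemma leP_of_acyclic (h𝕀 : IsIntervalHypergraph n 𝕀) (T : Edge 𝕀 → ℕ)
    (hT : ∀ H : Edge 𝕀, IsGreatest (H.1 : Set ℕ) (T H)) (B : Edge 𝕀 → ℕ)
    (hB : AcycOr 𝕀 B) : leP n 𝕀 B T := by
  classical
  have htr : Transitive (Relation.TransGen (Rel 𝕀 B)) :=
    fun a b c h1 h2 => Relation.TransGen.trans h1 h2
  have hir : ∀ a, ¬ Relation.TransGen (Rel 𝕀 B) a a := no_transGen_cycle hB.2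
  obtain ⟨l, hnd, hmem, hsplit⟩ := exists_topo htr hir (Finset.Icc 1 n).card
    (Finset.Icc 1 n) le_rfl
  have hfull : ∀ H : Edge 𝕀, ∃ y ∈ l, y ∈ H.1 := by
    intro H
    obtain ⟨hsub, y, hy⟩ := edge_sub h𝕀 H
    exact ⟨y, (hmem y).mpr (hsub hy), hy⟩
  have hBl : ∀ H : Edge 𝕀, B H ∈ l := by
    intro H
    exact (hmem _).mpr ((edge_sub h𝕀 H).1 (hB.1 H))
  have heq : OfL 𝕀 l = B := OfL_eq_of_topo hB.1 hBl hfull hsplit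
  have := reach h𝕀 T hT (asc l) l le_rfl hnd hmem
  rwa [heq] at this

end Main


lemma leP_mono {n : ℕ} {𝕀 : Finset (Finset ℕ)} {A B : Edge 𝕀 → ℕ} (h : leP n 𝕀 A B) :
    ∀ H, A H ≤ B H := by
  induction h with
  | refl => exact fun H => le_refl _
  | @tail b c hab hbc ih =>
    intro H
    obtain ⟨_, _, i, j, hne, h1, hij, hjn, hcond⟩ := hbc
    by_cases hBH : b H = c H
    · rw [← hBH]; exact ih H
    · obtain ⟨hi, hj⟩ := (hcond H).1 hBH
      have := ih H
      omega

lemma T_acyclic {𝕀 : Finset (Finset ℕ)} {T : Edge 𝕀 → ℕ}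
    (hT : ∀ H : Edge 𝕀, IsGreatest (H.1 : Set ℕ) (T H)) : IsAcyclic 𝕀 T := by
  rintro ⟨k, H, hk, hH0, hstep⟩
  have hdec : ∀ p < k, T (H (p + 1)) < T (H p) := by
    intro p hp
    obtain ⟨hm, hne⟩ := hstep p hp
    exact lt_of_le_of_ne ((hT (H p)).2 (Finset.mem_coe.mpr hm)) hne
  have key : ∀ p ≤ k, T (H p) + p ≤ T (H 0) := by
    intro p hp
    induction p with
    | zero => simp
    | succ q ih =>
      have h1 := hdec q (by omega)
      have h2 := ih (by omega)
      omega
  have := key k le_rfl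
  rw [hH0] at this
  omega

lemma Af_ok {n : ℕ} {𝕀 : Finset (Finset ℕ)} (h𝕀 : IsIntervalHypergraph n 𝕀)
    {j μj : ℕ} {Jj : Finset ℕ} {A : Edge 𝕀 → ℕ}
    (hJ : IsJj 𝕀 j Jj) (hμ : IsLeast ((Jj : Finset ℕ) : Set ℕ) μj) (hA : IsAj 𝕀 j μj A) :
    AcycOr 𝕀 A := by
  have hμJ : μj ∈ Jj := Finset.mem_coe.mp hμ.1
  have hsubJ : ∀ I ∈ 𝕀, j ∈ I → (∃ y ∈ I, y < j) → ∀ x ∈ Jj, x ∈ I :=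
    fun I hI hjI hy x hx => (hJ x).mp hx I hI hjI hy
  constructor
  · intro H
    by_cases hsp : j ∈ H.1 ∧ IsLeast (H.1 : Set ℕ) μj
    · rw [(hA H).1 hsp]; exact hsp.1
    · exact Finset.mem_coe.mp ((hA H).2 hsp).1
  · rintro ⟨k, H, hk, hH0, hstep⟩
    set X : ℕ → ℕ := fun q => A (H (q % k)) with hX
    have hper : ∀ q, X (q + 1) ∈ (H (q % k)).1 ∧ X (q + 1) ≠ X q := by
      intro q
      have hqk : q % k < k := Nat.mod_lt _ (by omega)
      have e0 := Nat.mod_add_mod q k 1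
      by_cases h1 : q % k + 1 < k
      · have e : (q + 1) % k = q % k + 1 := by rw [← e0]; exact Nat.mod_eq_of_lt h1
        have := hstep (q % k) hqk
        simp only [hX, e]
        exact this
      · have hqk1 : q % k + 1 = k := by omega
        have e : (q + 1) % k = 0 := by rw [← e0, hqk1]; exact Nat.mod_self k
        have hs := hstep (q % k) hqk
        rw [hqk1, hH0] at hs
        simp only [hX, e]
        exact hs
    have hdich : ∀ q, (IsLeast ((H (q % k)).1 : Set ℕ) (X q) ∧ X q < X (q + 1) ∧
        ¬ (j ∈ (H (q % k)).1 ∧ IsLeast ((H (q % k)).1 : Set ℕ) μj)) ∨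
        (X q = j ∧ j ∈ (H (q % k)).1 ∧ IsLeast ((H (q % k)).1 : Set ℕ) μj) := by
      intro q
      by_cases hsp : j ∈ (H (q % k)).1 ∧ IsLeast ((H (q % k)).1 : Set ℕ) μj
      · exact Or.inr ⟨(hA _).1 hsp, hsp.1, hsp.2⟩
      · have hle := (hA _).2 hsp
        refine Or.inl ⟨hle, ?_, hsp⟩
        exact lt_of_le_of_ne (hle.2 (Finset.mem_coe.mpr (hper q).1)) (Ne.symm (hper q).2)
    by_cases hex : ∀ q < k, X q < X (q + 1)
    · have := chain_lt hex k le_rfl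
      have hXk : X k = X 0 := by simp [hX, Nat.mod_self]
      omega
    · push_neg at hex
      obtain ⟨q₀, hq₀k, hq₀⟩ := hex
      rcases hdich q₀ with ⟨_, hlt, _⟩ | ⟨hXj, hjH, hμH⟩
      · omega
      · have hinv : ∀ d, 1 ≤ d → μj ≤ X (q₀ + d) ∧ X (q₀ + d) ≠ j := by
          intro d hd
          induction d with
          | zero => omega
          | succ e ih =>
            by_cases he : e = 0
            · subst he
              refine ⟨hμH.2 (Finset.mem_coe.mpr (hper q₀).1), ?_⟩
              have := (hper q₀).2
              rw [hXj] at this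
              exact this
            · obtain ⟨ih1, ih2⟩ := ih (by omega)
              rw [show q₀ + (e + 1) = q₀ + e + 1 by omega]
              rcases hdich (q₀ + e) with ⟨hleast, hlt, hnsp⟩ | ⟨hXj', _, _⟩
              · constructor
                · omega
                · intro hXe1j
                  have hjmem : j ∈ (H ((q₀ + e) % k)).1 := hXe1j ▸ (hper (q₀ + e)).1
                  have hXqlt : X (q₀ + e) < j := by omega
                  have hmem' : μj ∈ (H ((q₀ + e) % k)).1 :=
                    hsubJ _ (H _).2 hjmem ⟨X (q₀ + e), Finset.mem_coe.mp hleast.1, hXqlt⟩ μj hμJ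
                  have hXμ : X (q₀ + e) ≤ μj := hleast.2 (Finset.mem_coe.mpr hmem')
                  have hXeq : X (q₀ + e) = μj := le_antisymm hXμ ih1
                  exact hnsp ⟨hjmem, hXeq ▸ hleast⟩
              · exact absurd hXj' ih2
        have hper' : X (q₀ + k) = X q₀ := by simp [hX, Nat.add_mod_right]
        have := hinv k (by omega)
        rw [hper', hXj] at this
        exact this.2 rfl

lemma Jj_mem {n : ℕ} {𝕀 : Finset (Finset ℕ)} (h𝕀 : IsIntervalHypergraph n 𝕀)
    (hcl : ClosedUnderIntersection 𝕀) {j : ℕ} {Jj : Finset ℕ}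
    (hj : InJI 𝕀 j) (hJ : IsJj 𝕀 j Jj) : Jj ∈ 𝕀 := by
  classical
  obtain ⟨I0, hI0, hjI0, y0, hy0I, hy0lt⟩ := hj
  set 𝔽 := 𝕀.filter (fun I => j ∈ I ∧ ∃ y ∈ I, y < j) with h𝔽
  have hI0F : I0 ∈ 𝔽 := by
    rw [h𝔽, Finset.mem_filter]
    exact ⟨hI0, hjI0, y0, hy0I, hy0lt⟩
  have key : ∀ (S : Finset (Finset ℕ)) (_ : S.Nonempty), S ⊆ 𝔽 →
      ∃ K ∈ 𝕀, j ∈ K ∧ ∀ x, (x ∈ K ↔ ∀ I ∈ S, x ∈ I) := by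
    intro S hS
    induction hS using Finset.Nonempty.cons_induction with
    | singleton a =>
      intro hsub
      have haF : a ∈ 𝔽 := hsub (Finset.mem_singleton_self a)
      rw [h𝔽, Finset.mem_filter] at haF
      exact ⟨a, haF.1, haF.2.1, fun x => by simp⟩
    | cons a S ha hS ih =>
      intro hsub
      have haF : a ∈ 𝔽 := hsub (Finset.mem_cons_self a S)
      rw [h𝔽, Finset.mem_filter] at haF
      obtain ⟨K, hK, hjK, hchar⟩ := ih (fun I hI => hsub (Finset.mem_cons.mpr (Or.inr hI)))
      have hne : (a ∩ K).Nonempty := ⟨j, Finset.mem_inter.mpr ⟨haF.2.1, hjK⟩⟩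
      refine ⟨a ∩ K, hcl a haF.1 K hK hne, Finset.mem_inter.mpr ⟨haF.2.1, hjK⟩, ?_⟩
      intro x
      rw [Finset.mem_inter, hchar x]
      simp [Finset.mem_cons]
  obtain ⟨K, hK, hjK, hchar⟩ := key 𝔽 ⟨I0, hI0F⟩ (le_refl _)
  have hJK : Jj = K := by
    apply Finset.ext
    intro x
    rw [hJ x, hchar x]
    constructor
    · intro h I hI
      rw [h𝔽, Finset.mem_filter] at hI
      exact h I hI.1 hI.2.1 hI.2.2
    · intro h I hI hjI hy
      exact h I (by rw [h𝔽, Finset.mem_filter]; exact ⟨hI, hjI, hy⟩)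
  rw [hJK]
  exact hK

/-- For an interval hypergraph `𝕀` closed under intersection, the
orientation sending each `I ∈ 𝕀` to `max I` is acyclic, is the greatest element of
`P_𝕀`, and is the least upper bound of the family `{A_j : j ∈ 𝒥_𝕀}`. -/
theorem stmt16 (n : ℕ) (hn : 1 ≤ n) (𝕀 : Finset (Finset ℕ))
    (h𝕀 : IsIntervalHypergraph n 𝕀) (hcl : ClosedUnderIntersection 𝕀)
    (Jf : ℕ → Finset ℕ) (μ : ℕ → ℕ) (Af : ℕ → Edge 𝕀 → ℕ)
    (hfam : ∀ j, InJI 𝕀 j →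
      IsJj 𝕀 j (Jf j) ∧ IsLeast ((Jf j : Finset ℕ) : Set ℕ) (μ j) ∧ IsAj 𝕀 j (μ j) (Af j))
    (T : Edge 𝕀 → ℕ) (hT : ∀ H : Edge 𝕀, IsGreatest (H.1 : Set ℕ) (T H)) :
    AcycOr 𝕀 T ∧
    (∀ B, AcycOr 𝕀 B → leP n 𝕀 B T) ∧
    (∀ j, InJI 𝕀 j → leP n 𝕀 (Af j) T) ∧
    (∀ C, AcycOr 𝕀 C → (∀ j, InJI 𝕀 j → leP n 𝕀 (Af j) C) → leP n 𝕀 T C) := by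
  have hTor : IsOrientation 𝕀 T := fun H => Finset.mem_coe.mp (hT H).1
  have hTac : AcycOr 𝕀 T := ⟨hTor, T_acyclic hT⟩
  have hpart2 : ∀ B, AcycOr 𝕀 B → leP n 𝕀 B T := fun B hB => leP_of_acyclic h𝕀 T hT B hB
  have hpart3 : ∀ j, InJI 𝕀 j → leP n 𝕀 (Af j) T := by
    intro j hj
    obtain ⟨hJ, hμ, hA⟩ := hfam j hj
    exact hpart2 (Af j) (Af_ok h𝕀 hJ hμ hA)
  refine ⟨hTac, hpart2, hpart3, ?_⟩
  intro C hC hub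
  have hCT : C = T := by
    funext H
    by_contra hne
    have hCH : C H ∈ H.1 := hC.1 H
    have hle : C H ≤ T H := (hT H).2 (Finset.mem_coe.mpr hCH)
    have hlt : C H < T H := lt_of_le_of_ne hle hne
    obtain ⟨a, b, h1a, hab, hbn, hHab⟩ := h𝕀.1 H.1 H.2
    have hTb : T H ≤ b := by
      have := Finset.mem_coe.mp (hT H).1
      rw [hHab, Finset.mem_Icc] at this
      exact this.2
    have hmab : a ≤ C H ∧ C H ≤ b := by
      have := hCH
      rw [hHab, Finset.mem_Icc] at this
      exact this
    have hjH : C H + 1 ∈ H.1 := by rw [hHab, Finset.mem_Icc]; omega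
    have hjJI : InJI 𝕀 (C H + 1) := ⟨H.1, H.2, hjH, C H, hCH, by omega⟩
    obtain ⟨hJ, hμ, hA⟩ := hfam (C H + 1) hjJI
    have hKmem : Jf (C H + 1) ∈ 𝕀 := Jj_mem h𝕀 hcl hjJI hJ
    set E : Edge 𝕀 := ⟨Jf (C H + 1), hKmem⟩ with hE
    have hjJf : C H + 1 ∈ Jf (C H + 1) := (hJ (C H + 1)).mpr (fun I hI hjI _ => hjI)
    have hAj : Af (C H + 1) E = C H + 1 := (hA E).1 ⟨hjJf, hμ⟩
    have hCE : C H + 1 ≤ C E := by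
      have := leP_mono (hub (C H + 1) hjJI) E
      rw [hAj] at this
      exact this
    have hCEmem : C E ∈ Jf (C H + 1) := hC.1 E
    have hsub : ∀ x ∈ Jf (C H + 1), x ∈ H.1 :=
      fun x hx => (hJ x).mp hx H.1 H.2 hjH ⟨C H, hCH, by omega⟩
    have hmJf : C H ∈ Jf (C H + 1) := by
      rw [hJ (C H)]
      intro I hI hjI hyI
      obtain ⟨a', b', h1a', hab', hbn', hIab⟩ := h𝕀.1 I hI
      obtain ⟨y, hyI', hylt⟩ := hyI
      rw [hIab, Finset.mem_Icc] at hjI hyI' ⊢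
      omega
    exact two_cycle hC.2 (H := H) (K := E) (hsub _ hCEmem) (by omega) hmJf
  rw [hCT]
  exact Relation.ReflTransGen.refl
end IHL
end

section
/- Let 𝕀 be an interval hypergraph on [n] that is closed under intersection but not distributive (i.e., there exist I, J ∈ 𝕀 with I ⊈ J, J ⊈ I and I ∩ J ≠ ∅ such that I ∩ J ∉ 𝕀, or I ∩ J is neither initial nor final in some K ∈ 𝕀 with I ∩ J ⊆ K). Then there exists a join irreducible acyclic orientation A of 𝕀 (an element of P_𝕀 that is not minimal and covers exactly one element) such that A ≰ A_j in P_𝕀 for all j ∈ 𝒥_𝕀. -/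
namespace IHL

/-! ### Auxiliary development -/

open Classical in
/-- Basic facts about edges of an interval hypergraph. -/
lemma edge_basic {n : ℕ} {𝕀 : Finset (Finset ℕ)} (h𝕀 : IsIntervalHypergraph n 𝕀)
    {H : Finset ℕ} (hH : H ∈ 𝕀) :
    H.Nonempty ∧ (∀ x ∈ H, 1 ≤ x ∧ x ≤ n) ∧
      (∀ x z, x ∈ H → z ∈ H → ∀ y, x ≤ y → y ≤ z → y ∈ H) := by
  obtain ⟨a, b, ha, hab, hbn, rfl⟩ := h𝕀.1 H hH
  refine ⟨⟨a, by simp [Finset.mem_Icc, hab]⟩, ?_, ?_⟩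
  · intro x hx
    rw [Finset.mem_Icc] at hx
    exact ⟨le_trans ha hx.1, le_trans hx.2 hbn⟩
  · intro x z hx hz y hxy hyz
    rw [Finset.mem_Icc] at *
    exact ⟨le_trans hx.1 hxy, le_trans hyz hz.2⟩

lemma sInf_coe_eq {H : Finset ℕ} {a : ℕ} (ha : a ∈ H) (hlb : ∀ x ∈ H, a ≤ x) :
    sInf (H : Set ℕ) = a :=
  le_antisymm (Nat.sInf_le (by exact_mod_cast ha))
    (hlb _ (by exact_mod_cast Nat.sInf_mem (s := (H : Set ℕ)) ⟨a, by exact_mod_cast ha⟩))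

lemma sInf_mem_of_ne {H : Finset ℕ} (h : H.Nonempty) : sInf (H : Set ℕ) ∈ H := by
  have := Nat.sInf_mem (s := (H : Set ℕ)) (by exact_mod_cast h)
  exact_mod_cast this

lemma sInf_le_of_mem {H : Finset ℕ} {x : ℕ} (hx : x ∈ H) : sInf (H : Set ℕ) ≤ x :=
  Nat.sInf_le (by exact_mod_cast hx)

/-- Strict-rank criterion for acyclicity. -/
lemma acyclic_of_rank {𝕀 : Finset (Finset ℕ)} {O : Edge 𝕀 → ℕ} (φ : ℕ → ℕ)
    (hφ : ∀ H : Edge 𝕀, ∀ x ∈ H.1, x ≠ O H → φ (O H) < φ x) : IsAcyclic 𝕀 O := by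
  rintro ⟨k, H, hk2, hk0, hcyc⟩
  have key : ∀ p, p ≤ k → φ (O (H 0)) + p ≤ φ (O (H p)) := by
    intro p hp
    induction p with
    | zero => simp
    | succ q ih =>
      have hq : q < k := lt_of_lt_of_le (Nat.lt_succ_self q) hp
      have h1 := ih (le_of_lt hq)
      have h2 := hφ (H q) (O (H (q + 1))) (hcyc q hq).1 (hcyc q hq).2
      omega
  have := key k le_rfl
  rw [hk0] at this
  omega

/-- A 2-cycle witness refutes acyclicity. -/
lemma not_acyclic_of_two_cycle {𝕀 : Finset (Finset ℕ)} {O : Edge 𝕀 → ℕ}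
    (E0 E1 : Edge 𝕀) (h1 : O E1 ∈ E0.1) (h1' : O E1 ≠ O E0)
    (h0 : O E0 ∈ E1.1) (h0' : O E0 ≠ O E1) : ¬IsAcyclic 𝕀 O := by
  intro hac
  refine hac ⟨2, fun p => if p = 1 then E1 else E0, le_rfl, by norm_num, ?_⟩
  intro p hp
  interval_cases p <;> simp_all

/-- Flips are pointwise increasing, hence so is `leP`. -/
lemma leP_pointwise {n : ℕ} {𝕀 : Finset (Finset ℕ)} {O O' : Edge 𝕀 → ℕ}
    (h : leP n 𝕀 O O') : ∀ H, O H ≤ O' H := by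
  induction h with
  | refl => exact fun H => le_rfl
  | @tail b c _hab hbc ih =>
    intro H
    refine le_trans (ih H) ?_
    obtain ⟨_, _, i, j, _, _, hij, _, hcond⟩ := hbc
    by_cases hch : b H = c H
    · exact le_of_eq hch
    · obtain ⟨h1, h2⟩ := (hcond H).1 hch
      omega

/-- The orientation `A_{t,m}`. -/
noncomputable def AOr (𝕀 : Finset (Finset ℕ)) (t m : ℕ) : Edge 𝕀 → ℕ :=
  fun H => if t ∈ H.1 ∧ m ≤ sInf (H.1 : Set ℕ) then t else sInf (H.1 : Set ℕ)

/-- The orientation `B_i`, one flip below `A_{t,m}`. -/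
noncomputable def BOr (𝕀 : Finset (Finset ℕ)) (t m i : ℕ) : Edge 𝕀 → ℕ :=
  fun H => if i ∈ H.1 ∧ t ∈ H.1 ∧ m ≤ sInf (H.1 : Set ℕ) then i else AOr 𝕀 t m H

/-- `i` admits no blocking edge `H'` with `i ∈ H'`, `m ≤ min H' < i`, `max H' < t`. -/
def NoHp (𝕀 : Finset (Finset ℕ)) (t m i : ℕ) : Prop :=
  ¬∃ H ∈ 𝕀, i ∈ H ∧ m ≤ sInf (H : Set ℕ) ∧ sInf (H : Set ℕ) < i ∧ ∀ x ∈ H, x < t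

open Classical in
/-- The largest `i < t` with `m ≤ i` and `NoHp`. -/
noncomputable def istar (𝕀 : Finset (Finset ℕ)) (t m : ℕ) : ℕ :=
  Nat.findGreatest (fun i => m ≤ i ∧ NoHp 𝕀 t m i) (t - 1)

section Core

variable {n : ℕ} {𝕀 : Finset (Finset ℕ)} {t m v2 : ℕ} {K F : Finset ℕ}

/-- Convexity helper. -/
lemma mem_edge_between (h𝕀 : IsIntervalHypergraph n 𝕀) {H : Finset ℕ} (hH : H ∈ 𝕀)
    {y z : ℕ} (hz : z ∈ H) (h1 : sInf (H : Set ℕ) ≤ y) (h2 : y ≤ z) : y ∈ H := by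
  have hne : H.Nonempty := ⟨z, hz⟩
  exact (edge_basic h𝕀 hH).2.2 _ _ (sInf_mem_of_ne hne) hz y h1 h2

lemma NoHp_self (𝕀 : Finset (Finset ℕ)) (t m : ℕ) : NoHp 𝕀 t m m := by
  rintro ⟨H, _, _, h1, h2, _⟩; omega

lemma istar_ge (hmt : m < t) : m ≤ istar 𝕀 t m := by
  classical
  exact Nat.le_findGreatest (by omega) ⟨le_rfl, NoHp_self 𝕀 t m⟩

lemma istar_lt (hmt : m < t) : istar 𝕀 t m < t := by
  classical
  have h2 : istar 𝕀 t m ≤ t - 1 := Nat.findGreatest_le _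
  omega

lemma istar_spec (hmt : m < t) : NoHp 𝕀 t m (istar 𝕀 t m) := by
  classical
  exact (Nat.findGreatest_spec (P := fun i => m ≤ i ∧ NoHp 𝕀 t m i) (m := m)
    (by omega) ⟨le_rfl, NoHp_self 𝕀 t m⟩).2

lemma le_istar {i : ℕ} (hmi : m ≤ i) (hit : i < t) (hno : NoHp 𝕀 t m i) :
    i ≤ istar 𝕀 t m := by
  classical
  exact Nat.le_findGreatest (by omega) ⟨hmi, hno⟩

end Core

section Core2

variable {n : ℕ} {𝕀 : Finset (Finset ℕ)} {t m : ℕ}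

lemma AOr_mem (h𝕀 : IsIntervalHypergraph n 𝕀) (H : Edge 𝕀) : AOr 𝕀 t m H ∈ H.1 := by
  unfold AOr
  split
  · next h => exact h.1
  · exact sInf_mem_of_ne (edge_basic h𝕀 H.2).1

lemma BOr_mem (h𝕀 : IsIntervalHypergraph n 𝕀) (i : ℕ) (H : Edge 𝕀) :
    BOr 𝕀 t m i H ∈ H.1 := by
  unfold BOr
  split
  · next h => exact h.1
  · exact AOr_mem h𝕀 H

lemma AOr_acyclic (h𝕀 : IsIntervalHypergraph n 𝕀) (hmt : m < t) :
    IsAcyclic 𝕀 (AOr 𝕀 t m) := by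
  apply acyclic_of_rank (fun x => if x = t then 2 * m + 1 else 2 * x + 2)
  intro H x hx hxne
  by_cases hc : t ∈ H.1 ∧ m ≤ sInf (H.1 : Set ℕ)
  · have hA : AOr 𝕀 t m H = t := if_pos hc
    rw [hA] at hxne ⊢
    have hxm : m ≤ x := le_trans hc.2 (sInf_le_of_mem hx)
    split_ifs <;> omega
  · have hA : AOr 𝕀 t m H = sInf (H.1 : Set ℕ) := if_neg hc
    rw [hA] at hxne ⊢
    have hsx : sInf (H.1 : Set ℕ) ≤ x := sInf_le_of_mem hx
    have hsinf_ne : sInf (H.1 : Set ℕ) ≠ t := by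
      intro h
      exact hc ⟨h ▸ sInf_mem_of_ne ⟨x, hx⟩, by omega⟩
    by_cases hxt : x = t
    · have hsm : ¬ m ≤ sInf (H.1 : Set ℕ) := fun h => hc ⟨hxt ▸ hx, h⟩
      have hsm' : sInf (H.1 : Set ℕ) < m := by omega
      split_ifs <;> omega
    · split_ifs <;> omega

lemma BOr_acyclic (h𝕀 : IsIntervalHypergraph n 𝕀) (hmt : m < t) :
    IsAcyclic 𝕀 (BOr 𝕀 t m (istar 𝕀 t m)) := by
  set i := istar 𝕀 t m with hidef
  have him : m ≤ i := istar_ge hmt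
  have hit : i < t := istar_lt hmt
  have hino : NoHp 𝕀 t m i := istar_spec hmt
  have hine : i ≠ t := by omega
  apply acyclic_of_rank (fun x => if x = t then 2 * i + 3 else if x = i then 2 * m + 1
    else 2 * x + 2)
  intro H x hx hxne
  by_cases hc1 : i ∈ H.1 ∧ t ∈ H.1 ∧ m ≤ sInf (H.1 : Set ℕ)
  · have hB : BOr 𝕀 t m i H = i := if_pos hc1
    rw [hB] at hxne ⊢
    have hxm : m ≤ x := le_trans hc1.2.2 (sInf_le_of_mem hx)
    split_ifs <;> omega
  · have hB : BOr 𝕀 t m i H = AOr 𝕀 t m H := if_neg hc1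
    rw [hB] at hxne ⊢
    by_cases hc : t ∈ H.1 ∧ m ≤ sInf (H.1 : Set ℕ)
    · -- A H = t, and i ∉ H, so sInf H > i
      have hA : AOr 𝕀 t m H = t := if_pos hc
      rw [hA] at hxne ⊢
      have hiH : i ∉ H.1 := fun h => hc1 ⟨h, hc⟩
      have hsi : i < sInf (H.1 : Set ℕ) := by
        by_contra hle
        exact hiH (mem_edge_between h𝕀 H.2 hc.1 (by omega) (le_of_lt hit))
      have hxi : i < x := lt_of_lt_of_le hsi (sInf_le_of_mem hx)
      split_ifs <;> omega
    · have hA : AOr 𝕀 t m H = sInf (H.1 : Set ℕ) := if_neg hc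
      rw [hA] at hxne ⊢
      set u := sInf (H.1 : Set ℕ) with hu
      have hsx : u ≤ x := sInf_le_of_mem hx
      have hu_ne_t : u ≠ t := by
        intro h
        exact hc ⟨h ▸ sInf_mem_of_ne ⟨x, hx⟩, by omega⟩
      by_cases hui : u = i
      · -- t ∉ H
        have htH : t ∉ H.1 := by
          intro htH
          exact hc ⟨htH, by omega⟩
        have hxt : x ≠ t := fun h => htH (h ▸ hx)
        have hxi' : x ≠ i := fun h => hxne (by omega)
        rw [if_neg hu_ne_t, if_pos hui, if_neg hxt, if_neg hxi']
        omega
      · by_cases hxt : x = t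
        · have hum : u < m := by
            by_contra hge
            exact hc ⟨hxt ▸ hx, by omega⟩
          rw [if_neg hu_ne_t, if_neg hui, if_pos hxt]; omega
        · by_cases hxi : x = i
          · -- u < m, else H is a blocking edge for i
            have hum : u < m := by
              by_contra hge
              push_neg at hge
              have htH : t ∉ H.1 := fun h => hc ⟨h, hge⟩
              have hallt : ∀ y ∈ H.1, y < t := by
                intro y hy
                by_contra hyt
                exact htH (mem_edge_between h𝕀 H.2 hy (by omega)
                  (by omega))
              exact hino ⟨H.1, H.2, hxi ▸ hx, hge, by omega, hallt⟩
            rw [if_neg hu_ne_t, if_neg hui, if_neg hxt, if_pos hxi]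
            omega
          · rw [if_neg hu_ne_t, if_neg hui, if_neg hxt, if_neg hxi]
            omega

end Core2

section Core3

variable {n : ℕ} {𝕀 : Finset (Finset ℕ)} {t m v2 : ℕ} {K F : Finset ℕ}

lemma istar_lt_v2 (hmt : m < t) (hvt : v2 < t)
    (G2 : ∀ i, v2 ≤ i → i < t → ∃ H ∈ 𝕀, i ∈ H ∧ m ≤ sInf (H : Set ℕ) ∧
      sInf (H : Set ℕ) < i ∧ ∀ x ∈ H, x < t) :
    istar 𝕀 t m < v2 := by
  by_contra hge
  push_neg at hge
  exact istar_spec hmt (G2 _ hge (istar_lt hmt))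

/-- The flip condition at `i` is equivalent to the one at `i*`, by the gap property. -/
lemma cond_iff (h𝕀 : IsIntervalHypergraph n 𝕀) (hmt : m < t)
    (histv2 : istar 𝕀 t m < v2)
    (G1 : ∀ H ∈ 𝕀, t ∈ H → ¬(m < sInf (H : Set ℕ) ∧ sInf (H : Set ℕ) < v2))
    {i : ℕ} (hmi : m ≤ i) (hi : i ≤ istar 𝕀 t m) (H : Edge 𝕀) :
    (i ∈ H.1 ∧ t ∈ H.1 ∧ m ≤ sInf (H.1 : Set ℕ)) ↔
      (istar 𝕀 t m ∈ H.1 ∧ t ∈ H.1 ∧ m ≤ sInf (H.1 : Set ℕ)) := by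
  have hst := istar_lt (𝕀 := 𝕀) hmt
  constructor
  · rintro ⟨hiH, htH, hm⟩
    refine ⟨mem_edge_between h𝕀 H.2 htH ?_ (le_of_lt hst), htH, hm⟩
    exact le_trans (sInf_le_of_mem hiH) hi
  · rintro ⟨hsH, htH, hm⟩
    have hsle : sInf (H.1 : Set ℕ) ≤ i := by
      by_contra hgt
      push_neg at hgt
      refine G1 H.1 H.2 htH ⟨by omega, ?_⟩
      have := sInf_le_of_mem hsH
      omega
    exact ⟨mem_edge_between h𝕀 H.2 htH hsle (by omega), htH, hm⟩

lemma AOr_val_K (hK : K ∈ 𝕀) (htK : t ∈ K) (hKm : sInf (K : Set ℕ) = m) :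
    AOr 𝕀 t m ⟨K, hK⟩ = t := if_pos ⟨htK, by rw [hKm]⟩

lemma BOr_val_K (h𝕀 : IsIntervalHypergraph n 𝕀) (hK : K ∈ 𝕀) (htK : t ∈ K)
    (hKm : sInf (K : Set ℕ) = m) (hmt : m < t) {i : ℕ} (hmi : m ≤ i) (hit : i < t) :
    BOr 𝕀 t m i ⟨K, hK⟩ = i := by
  refine if_pos ⟨?_, htK, by rw [hKm]⟩
  exact mem_edge_between h𝕀 hK htK (by rw [hKm]; exact hmi) (le_of_lt hit)

/-- `B = B_{i*}` is one increasing flip below `A`. -/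
lemma flip_B_A (h𝕀 : IsIntervalHypergraph n 𝕀) (hK : K ∈ 𝕀) (htK : t ∈ K)
    (hKm : sInf (K : Set ℕ) = m) (hmt : m < t) :
    FlipStep n 𝕀 (BOr 𝕀 t m (istar 𝕀 t m)) (AOr 𝕀 t m) := by
  set i := istar 𝕀 t m with hidef
  have him : m ≤ i := istar_ge hmt
  have hit : i < t := istar_lt hmt
  have hm1 : 1 ≤ m := by
    have := (edge_basic h𝕀 hK).2.1 m (hKm ▸ sInf_mem_of_ne (edge_basic h𝕀 hK).1)
    exact this.1
  have htn : t ≤ n := ((edge_basic h𝕀 hK).2.1 t htK).2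
  refine ⟨⟨fun H => BOr_mem h𝕀 i H, BOr_acyclic h𝕀 hmt⟩,
    ⟨fun H => AOr_mem h𝕀 H, AOr_acyclic h𝕀 hmt⟩, i, t, ?_, by omega, hit, htn, ?_⟩
  · intro h
    have := congrFun h ⟨K, hK⟩
    rw [BOr_val_K h𝕀 hK htK hKm hmt him hit, AOr_val_K hK htK hKm] at this
    omega
  · intro H
    constructor
    · intro hne
      unfold BOr at hne ⊢
      split at hne
      · next h => exact ⟨if_pos h, if_pos ⟨h.2.1, h.2.2⟩⟩
      · exact absurd rfl hne
    · intro hiH htH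
      constructor
      · intro hB
        unfold BOr at hB
        split at hB
        · next h => exact if_pos ⟨h.2.1, h.2.2⟩
        · next h =>
          unfold AOr at hB
          split at hB
          · omega
          · next h2 =>
            exact absurd ⟨hiH, htH, hB ▸ him⟩ h
      · intro hA
        have hcnd : t ∈ H.1 ∧ m ≤ sInf (H.1 : Set ℕ) := by
          by_contra hcon
          have : AOr 𝕀 t m H = sInf (H.1 : Set ℕ) := if_neg hcon
          rw [hA] at this
          exact hcon ⟨htH, by omega⟩
        exact if_pos ⟨hiH, hcnd.1, hcnd.2⟩

/-- Classification of flips into `A`. -/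
lemma flip_into_A (h𝕀 : IsIntervalHypergraph n 𝕀) (hK : K ∈ 𝕀) (htK : t ∈ K)
    (hKm : sInf (K : Set ℕ) = m) (hmt : m < t) {C : Edge 𝕀 → ℕ}
    (hC : FlipStep n 𝕀 C (AOr 𝕀 t m)) :
    ∃ i, m ≤ i ∧ i < t ∧ NoHp 𝕀 t m i ∧ C = BOr 𝕀 t m i := by
  obtain ⟨hCac, _hAac, i, j, hne, _hi1, hij, _hjn, hcond⟩ := hC
  have hex : ∃ H, C H ≠ AOr 𝕀 t m H := by
    by_contra h
    push_neg at h
    exact hne (funext h)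
  obtain ⟨H₀, hH₀⟩ := hex
  obtain ⟨hCi, hAj⟩ := (hcond H₀).1 hH₀
  have hiH₀ : i ∈ H₀.1 := hCi ▸ hCac.1 H₀
  have hjt : j = t ∧ t ∈ H₀.1 ∧ m ≤ sInf (H₀.1 : Set ℕ) := by
    unfold AOr at hAj
    split at hAj
    · next h => exact ⟨hAj.symm, h⟩
    · have := sInf_le_of_mem hiH₀
      omega
  obtain ⟨rfl, htH₀, hmH₀⟩ := hjt
  have him : m ≤ i := le_trans hmH₀ (sInf_le_of_mem hiH₀)
  have hiK : i ∈ K := mem_edge_between h𝕀 hK htK (by rw [hKm]; exact him) (le_of_lt hij)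
  have hAK : AOr 𝕀 j m ⟨K, hK⟩ = j := AOr_val_K hK htK hKm
  have hCK : C ⟨K, hK⟩ = i := ((hcond ⟨K, hK⟩).2 hiK htK).mpr hAK
  have hno : NoHp 𝕀 j m i := by
    rintro ⟨Hp, hHp𝕀, hiHp, hmp, hpi, hallt⟩
    have htHp : j ∉ Hp := fun h => absurd (hallt _ h) (lt_irrefl _)
    set E0 : Edge 𝕀 := ⟨Hp, hHp𝕀⟩
    set E1 : Edge 𝕀 := ⟨K, hK⟩
    have hCHp : C E0 = sInf (Hp : Set ℕ) := by
      have hA0 : AOr 𝕀 j m E0 = sInf (Hp : Set ℕ) := if_neg (fun hcnd => htHp hcnd.1)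
      by_cases hch : C E0 = AOr 𝕀 j m E0
      · rw [hch, hA0]
      · obtain ⟨_, hA⟩ := (hcond E0).1 hch
        rw [hA0] at hA
        have := sInf_mem_of_ne (edge_basic h𝕀 hHp𝕀).1
        rw [hA] at this
        exact absurd this htHp
    refine absurd hCac.2 (not_acyclic_of_two_cycle E0 E1 ?_ ?_ ?_ ?_)
    · rw [hCK]; exact hiHp
    · rw [hCK, hCHp]; omega
    · rw [hCHp]
      exact mem_edge_between h𝕀 hK htK (by rw [hKm]; exact hmp) (by omega)
    · rw [hCK, hCHp]; omega
  refine ⟨i, him, hij, hno, funext fun H => ?_⟩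
  by_cases hcnd : i ∈ H.1 ∧ j ∈ H.1 ∧ m ≤ sInf (H.1 : Set ℕ)
  · have hB : BOr 𝕀 j m i H = i := if_pos hcnd
    rw [hB]
    exact ((hcond H).2 hcnd.1 hcnd.2.1).mpr (if_pos ⟨hcnd.2.1, hcnd.2.2⟩)
  · have hB : BOr 𝕀 j m i H = AOr 𝕀 j m H := if_neg hcnd
    rw [hB]
    by_contra hch
    obtain ⟨hCi', hA'⟩ := (hcond H).1 hch
    have hiH : i ∈ H.1 := hCi' ▸ hCac.1 H
    have : j ∈ H.1 ∧ m ≤ sInf (H.1 : Set ℕ) := by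
      by_contra hcon
      unfold AOr at hA'
      split at hA'
      · next h => exact hcon h
      · have : j ∈ H.1 := hA' ▸ sInf_mem_of_ne (edge_basic h𝕀 H.2).1
        exact hcon ⟨this, by omega⟩
    exact hcnd ⟨hiH, this.1, this.2⟩

end Core3

section Core4

variable {n : ℕ} {𝕀 : Finset (Finset ℕ)} {t m v2 : ℕ} {K F : Finset ℕ}

lemma BOr_le_Bstar (h𝕀 : IsIntervalHypergraph n 𝕀) (hmt : m < t)
    (histv2 : istar 𝕀 t m < v2)
    (G1 : ∀ H ∈ 𝕀, t ∈ H → ¬(m < sInf (H : Set ℕ) ∧ sInf (H : Set ℕ) < v2))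
    {i : ℕ} (hmi : m ≤ i) (hi : i ≤ istar 𝕀 t m) (H : Edge 𝕀) :
    BOr 𝕀 t m i H ≤ BOr 𝕀 t m (istar 𝕀 t m) H := by
  unfold BOr
  by_cases hcnd : i ∈ H.1 ∧ t ∈ H.1 ∧ m ≤ sInf (H.1 : Set ℕ)
  · rw [if_pos hcnd, if_pos ((cond_iff h𝕀 hmt histv2 G1 hmi hi H).mp hcnd)]
    exact hi
  · rw [if_neg hcnd,
      if_neg (fun h => hcnd ((cond_iff h𝕀 hmt histv2 G1 hmi hi H).mpr h))]

/-- For `i < i*`, `B_i` is one flip below `B_{i*}`. -/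
lemma flip_Bi_Bstar (h𝕀 : IsIntervalHypergraph n 𝕀) (hK : K ∈ 𝕀) (htK : t ∈ K)
    (hKm : sInf (K : Set ℕ) = m) (hmt : m < t) (histv2 : istar 𝕀 t m < v2)
    (G1 : ∀ H ∈ 𝕀, t ∈ H → ¬(m < sInf (H : Set ℕ) ∧ sInf (H : Set ℕ) < v2))
    {i : ℕ} (hmi : m ≤ i) (hilt : i < istar 𝕀 t m)
    (hBiac : AcycOr 𝕀 (BOr 𝕀 t m i)) :
    FlipStep n 𝕀 (BOr 𝕀 t m i) (BOr 𝕀 t m (istar 𝕀 t m)) := by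
  set is := istar 𝕀 t m with hisdef
  have hisno : NoHp 𝕀 t m is := istar_spec hmt
  have hist : is < t := istar_lt hmt
  have hit : i < t := by omega
  have hm1 : 1 ≤ m := by
    have := (edge_basic h𝕀 hK).2.1 m (hKm ▸ sInf_mem_of_ne (edge_basic h𝕀 hK).1)
    exact this.1
  have htn : t ≤ n := ((edge_basic h𝕀 hK).2.1 t htK).2
  have hKi : BOr 𝕀 t m i ⟨K, hK⟩ = i := BOr_val_K h𝕀 hK htK hKm hmt hmi hit
  have hKis : BOr 𝕀 t m is ⟨K, hK⟩ = is :=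
    BOr_val_K h𝕀 hK htK hKm hmt (istar_ge hmt) hist
  refine ⟨hBiac, ⟨fun H => BOr_mem h𝕀 is H, BOr_acyclic h𝕀 hmt⟩, i, is, ?_, by omega,
    hilt, by omega, ?_⟩
  · intro h
    have := congrFun h ⟨K, hK⟩
    rw [hKi, hKis] at this
    omega
  · intro H
    have hiff := cond_iff h𝕀 hmt histv2 G1 hmi (le_of_lt hilt) H
    constructor
    · intro hne
      unfold BOr at hne ⊢
      by_cases hcnd : i ∈ H.1 ∧ t ∈ H.1 ∧ m ≤ sInf (H.1 : Set ℕ)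
      · rw [if_pos hcnd, if_pos (hiff.mp hcnd)]
        exact ⟨rfl, rfl⟩
      · rw [if_neg hcnd, if_neg (fun h => hcnd (hiff.mpr h))] at hne
        exact absurd rfl hne
    · intro hiH hisH
      constructor
      · intro hB
        by_cases hcnd : i ∈ H.1 ∧ t ∈ H.1 ∧ m ≤ sInf (H.1 : Set ℕ)
        · exact if_pos (hiff.mp hcnd)
        · exfalso
          unfold BOr at hB
          rw [if_neg hcnd] at hB
          unfold AOr at hB
          split at hB
          · omega
          · next h2 =>
            -- sInf H = i, t ∉ H (else cond), so H is a blocking edge for i*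
            have htH : t ∉ H.1 := by
              intro htH
              exact hcnd ⟨hiH, htH, by omega⟩
            have hallt : ∀ y ∈ H.1, y < t := by
              intro y hy
              by_contra hyt
              exact htH (mem_edge_between h𝕀 H.2 hy (by omega) (by omega))
            exact hisno ⟨H.1, H.2, hisH, by omega, by omega, hallt⟩
      · intro hB
        by_cases hcnd : is ∈ H.1 ∧ t ∈ H.1 ∧ m ≤ sInf (H.1 : Set ℕ)
        · exact if_pos (hiff.mpr hcnd)
        · exfalso
          unfold BOr at hB
          rw [if_neg hcnd] at hB
          unfold AOr at hB
          split at hB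
          · omega
          · have := sInf_le_of_mem hiH
            omega

/-- The main core theorem: given the D-pair data, the desired join irreducible exists. -/
theorem core_main (h𝕀 : IsIntervalHypergraph n 𝕀)
    (hK : K ∈ 𝕀) (hF : F ∈ 𝕀) (htK : t ∈ K) (htF : t ∈ F)
    (hKm : sInf (K : Set ℕ) = m) (hFv : sInf (F : Set ℕ) = v2)
    (hmv : m < v2) (hvt : v2 < t)
    (G1 : ∀ H ∈ 𝕀, t ∈ H → ¬(m < sInf (H : Set ℕ) ∧ sInf (H : Set ℕ) < v2))
    (G2 : ∀ i, v2 ≤ i → i < t → ∃ H ∈ 𝕀, i ∈ H ∧ m ≤ sInf (H : Set ℕ) ∧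
      sInf (H : Set ℕ) < i ∧ ∀ x ∈ H, x < t) :
    ∃ A, AcycOr 𝕀 A ∧
      (¬∀ B, AcycOr 𝕀 B → leP n 𝕀 A B) ∧
      (∃! B, AcycOr 𝕀 B ∧ CoversP n 𝕀 B A) ∧
      ∀ (j μj : ℕ) (Aj : Edge 𝕀 → ℕ), IsAj 𝕀 j μj Aj → ¬leP n 𝕀 A Aj := by
  have hmt : m < t := lt_trans hmv hvt
  have histv2 : istar 𝕀 t m < v2 := istar_lt_v2 hmt hvt G2
  set A := AOr 𝕀 t m with hAdef
  set B := BOr 𝕀 t m (istar 𝕀 t m) with hBdef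
  have hAac : AcycOr 𝕀 A := ⟨fun H => AOr_mem h𝕀 H, AOr_acyclic h𝕀 hmt⟩
  have hBac : AcycOr 𝕀 B := ⟨fun H => BOr_mem h𝕀 _ H, BOr_acyclic h𝕀 hmt⟩
  have hAK : A ⟨K, hK⟩ = t := AOr_val_K hK htK hKm
  have hBK : B ⟨K, hK⟩ = istar 𝕀 t m :=
    BOr_val_K h𝕀 hK htK hKm hmt (istar_ge hmt) (istar_lt hmt)
  have hBA : FlipStep n 𝕀 B A := flip_B_A h𝕀 hK htK hKm hmt
  have hBneA : B ≠ A := by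
    intro h
    have := congrFun h ⟨K, hK⟩
    rw [hBK, hAK] at this
    have := istar_lt (𝕀 := 𝕀) hmt
    omega
  have hltBA : ltP n 𝕀 B A := ⟨Relation.ReflTransGen.single hBA, hBneA⟩
  -- KEY: any one-flip predecessor of A lies pointwise below B
  have KEY : ∀ C, FlipStep n 𝕀 C A → ∀ H, C H ≤ B H := by
    intro C hC H
    obtain ⟨i, hmi, hit, hno, rfl⟩ := flip_into_A h𝕀 hK htK hKm hmt hC
    exact BOr_le_Bstar h𝕀 hmt histv2 G1 hmi (le_istar hmi hit hno) H
  have lastflip : ∀ C, ltP n 𝕀 C A → ∃ C', leP n 𝕀 C C' ∧ FlipStep n 𝕀 C' A := by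
    intro C hC
    rcases Relation.ReflTransGen.cases_tail hC.1 with h | ⟨C', h1, h2⟩
    · exact absurd h.symm hC.2
    · exact ⟨C', h1, h2⟩
  refine ⟨A, hAac, ?_, ⟨B, ⟨hBac, hltBA, ?_⟩, ?_⟩, ?_⟩
  · -- not the minimum
    intro hall
    have := leP_pointwise (hall B hBac) ⟨K, hK⟩
    rw [hAK, hBK] at this
    have := istar_lt (𝕀 := 𝕀) hmt
    omega
  · -- B is a cover: nothing strictly between B and A
    rintro ⟨C, hCac, hBC, hCA⟩
    obtain ⟨C', hCC', hC'A⟩ := lastflip C hCA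
    have h1 := leP_pointwise hBC.1
    have h2 := leP_pointwise hCC'
    have h3 := KEY C' hC'A
    have : C = B := funext fun H => le_antisymm (le_trans (h2 H) (h3 H)) (h1 H)
    exact hBC.2 this.symm
  · -- uniqueness of the cover
    rintro B'' ⟨hB''ac, hB''lt, hB''nb⟩
    by_contra hne''
    obtain ⟨C', hB''C', hC'A⟩ := lastflip B'' hB''lt
    obtain ⟨i, hmi, hit, hno, rfl⟩ := flip_into_A h𝕀 hK htK hKm hmt hC'A
    have hile : i ≤ istar 𝕀 t m := le_istar hmi hit hno
    have hlePB''B : leP n 𝕀 B'' B := by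
      rcases eq_or_lt_of_le hile with h | h
      · rw [h] at hB''C'
        exact hB''C'
      · exact Relation.ReflTransGen.tail hB''C'
          (flip_Bi_Bstar h𝕀 hK htK hKm hmt histv2 G1 hmi h hC'A.1)
    exact hB''nb ⟨B, hBac, ⟨hlePB''B, hne''⟩, hltBA⟩
  · -- A is not below any A_j
    intro j μj Aj hAj hle
    have hpw := leP_pointwise hle
    have hmK : m ∈ K := hKm ▸ sInf_mem_of_ne (edge_basic h𝕀 hK).1
    have hvF : v2 ∈ F := hFv ▸ sInf_mem_of_ne (edge_basic h𝕀 hF).1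
    by_cases hcase : j ∈ K ∧ IsLeast (K : Set ℕ) μj
    · -- μj = m, use F
      have hμ : μj = m := by
        have h1 : μj ≤ m := hcase.2.2 (by exact_mod_cast hmK)
        have h2 : m ≤ μj := by
          have : μj ∈ K := by exact_mod_cast hcase.2.1
          rw [← hKm]
          exact sInf_le_of_mem this
        omega
      have hAF : A ⟨F, hF⟩ = t := if_pos ⟨htF, by rw [hFv]; omega⟩
      have hnF : ¬(j ∈ (⟨F, hF⟩ : Edge 𝕀).1 ∧ IsLeast ((F : Finset ℕ) : Set ℕ) μj) := by
        rintro ⟨_, hl⟩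
        have h1 : μj ≤ v2 := hl.2 (by exact_mod_cast hvF)
        have h2 : v2 ≤ μj := by
          have : μj ∈ F := by exact_mod_cast hl.1
          rw [← hFv]
          exact sInf_le_of_mem this
        omega
      have hAjF : IsLeast ((F : Finset ℕ) : Set ℕ) (Aj ⟨F, hF⟩) := (hAj ⟨F, hF⟩).2 hnF
      have hAjFval : Aj ⟨F, hF⟩ ≤ v2 := hAjF.2 (by exact_mod_cast hvF)
      have := hpw ⟨F, hF⟩
      rw [hAF] at this
      omega
    · have hAjK : IsLeast ((K : Finset ℕ) : Set ℕ) (Aj ⟨K, hK⟩) := (hAj ⟨K, hK⟩).2 hcase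
      have hAjKval : Aj ⟨K, hK⟩ ≤ m := hAjK.2 (by exact_mod_cast hmK)
      have := hpw ⟨K, hK⟩
      rw [hAK] at this
      omega

end Core4

section Part1

variable {n : ℕ} {𝕀 : Finset (Finset ℕ)}

lemma min_coe_eq {s : Finset ℕ} (h : s.Nonempty) : s.min = ((sInf (s : Set ℕ) : ℕ) : WithBot ℕ) := by
  rw [← Finset.coe_min' h]
  congr 1
  exact le_antisymm (Finset.min'_le _ _ (sInf_mem_of_ne h)) (sInf_le_of_mem (s.min'_mem h))

lemma max_coe_eq {s : Finset ℕ} (h : s.Nonempty) : s.max = (s.max' h : WithBot ℕ) :=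
  (Finset.coe_max' h).symm

/-- The recursive construction of the D-pair data. -/
theorem conf_rec (h𝕀 : IsIntervalHypergraph n 𝕀) (hcl : ClosedUnderIntersection 𝕀) :
    ∀ t (K F B : Finset ℕ), K ∈ 𝕀 → F ∈ 𝕀 → B ∈ 𝕀 → t ∈ K → t ∈ F →
    sInf (K : Set ℕ) < sInf (F : Set ℕ) → sInf (B : Set ℕ) < sInf (F : Set ℕ) →
    (∃ β ∈ B, sInf (F : Set ℕ) ≤ β) → (∀ x ∈ B, x < t) →
    ∃ (t' m' v2' : ℕ) (K' F' : Finset ℕ), K' ∈ 𝕀 ∧ F' ∈ 𝕀 ∧ t' ∈ K' ∧ t' ∈ F' ∧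
      sInf (K' : Set ℕ) = m' ∧ sInf (F' : Set ℕ) = v2' ∧ m' < v2' ∧ v2' < t' ∧
      (∀ H ∈ 𝕀, t' ∈ H → ¬(m' < sInf (H : Set ℕ) ∧ sInf (H : Set ℕ) < v2')) ∧
      (∀ i, v2' ≤ i → i < t' → ∃ H ∈ 𝕀, i ∈ H ∧ m' ≤ sInf (H : Set ℕ) ∧
        sInf (H : Set ℕ) < i ∧ ∀ x ∈ H, x < t') := by
  intro t
  induction t using Nat.strong_induction_on with
  | _ t ih =>
  intro K F B hK hF hB htK htF hKF hBF hβex hBt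
  classical
  obtain ⟨β, hβB, hβv⟩ := hβex
  have hβt : β < t := hBt β hβB
  set v := sInf (F : Set ℕ) with hv
  set P : ℕ → Prop := fun u => u < v ∧ ∃ K' ∈ 𝕀, t ∈ K' ∧ sInf (K' : Set ℕ) = u with hP
  have hPm0 : P (sInf (K : Set ℕ)) := by
    simp only [hP]
    exact ⟨hKF, K, hK, htK, rfl⟩
  have hm0t : sInf (K : Set ℕ) ≤ t := sInf_le_of_mem htK
  set m' := Nat.findGreatest P t with hm'def
  have hm'P : P m' := Nat.findGreatest_spec hm0t hPm0
  simp only [hP] at hm'P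
  obtain ⟨hm'v, K', hK', htK', hK'm⟩ := hm'P
  have hmax : ∀ u, m' < u → u < v → (∃ E ∈ 𝕀, t ∈ E ∧ sInf (E : Set ℕ) = u) → False := by
    rintro u h1 h2 ⟨E, hE, htE, hEu⟩
    have hut : u ≤ t := hEu ▸ sInf_le_of_mem htE
    refine Nat.findGreatest_is_greatest h1 hut ?_
    simp only [hP]
    exact ⟨h2, E, hE, htE, hEu⟩
  set Q : Set ℕ := {u | m' < u ∧ ∃ E ∈ 𝕀, t ∈ E ∧ sInf (E : Set ℕ) = u} with hQ
  have hvQ : v ∈ Q := by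
    simp only [hQ, Set.mem_setOf_eq]
    exact ⟨hm'v, F, hF, htF, rfl⟩
  set v2 := sInf Q with hv2def
  have hv2Q : v2 ∈ Q := Nat.sInf_mem ⟨v, hvQ⟩
  simp only [hQ, Set.mem_setOf_eq] at hv2Q
  obtain ⟨hm'v2, F2, hF2, htF2, hF2v⟩ := hv2Q
  have hv2v : v2 = v := by
    rcases lt_or_eq_of_le (Nat.sInf_le hvQ) with h | h
    · exact absurd ⟨F2, hF2, htF2, hF2v⟩ (hmax v2 hm'v2 h)
    · exact h
  have G1' : ∀ H ∈ 𝕀, t ∈ H → ¬(m' < sInf (H : Set ℕ) ∧ sInf (H : Set ℕ) < v2) := by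
    rintro H hH htH ⟨h1, h2⟩
    have hmem : sInf (H : Set ℕ) ∈ Q := by
      simp only [hQ, Set.mem_setOf_eq]
      exact ⟨h1, H, hH, htH, rfl⟩
    have := Nat.sInf_le hmem
    omega
  -- the bridge B' = B ∩ K'
  have hβK' : β ∈ K' := mem_edge_between h𝕀 hK' htK' (by rw [hK'm]; omega) (le_of_lt hβt)
  set B' := B ∩ K' with hB'def
  have hβB' : β ∈ B' := Finset.mem_inter.mpr ⟨hβB, hβK'⟩
  have hB'𝕀 : B' ∈ 𝕀 := hcl B hB K' hK' ⟨β, hβB'⟩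
  set x0 := max (sInf (B : Set ℕ)) m' with hx0def
  have hx0β : x0 ≤ β := max_le (sInf_le_of_mem hβB) (by omega)
  have hx0B : x0 ∈ B :=
    (edge_basic h𝕀 hB).2.2 _ _ (sInf_mem_of_ne (edge_basic h𝕀 hB).1) hβB x0
      (le_max_left _ _) hx0β
  have hx0K' : x0 ∈ K' :=
    mem_edge_between h𝕀 hK' htK' (by rw [hK'm]; exact le_max_right _ _)
      (le_trans hx0β (le_of_lt hβt))
  have hx0B' : x0 ∈ B' := Finset.mem_inter.mpr ⟨hx0B, hx0K'⟩
  have hx0v : x0 < v := max_lt hBF hm'v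
  have hsB'x0 : sInf (B' : Set ℕ) ≤ x0 := sInf_le_of_mem hx0B'
  have hsB'm : m' ≤ sInf (B' : Set ℕ) := by
    have hmem := sInf_mem_of_ne (H := B') ⟨β, hβB'⟩
    have : sInf (B' : Set ℕ) ∈ K' := (Finset.mem_inter.mp hmem).2
    rw [← hK'm]
    exact sInf_le_of_mem this
  have hB't : ∀ x ∈ B', x < t := fun x hx => hBt x (Finset.mem_inter.mp hx).1
  by_cases hcov : ∀ i, v2 ≤ i → i < t → ∃ H ∈ 𝕀, i ∈ H ∧ m' ≤ sInf (H : Set ℕ) ∧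
      sInf (H : Set ℕ) < i ∧ ∀ x ∈ H, x < t
  · exact ⟨t, m', v2, K', F2, hK', hF2, htK', htF2, hK'm, hF2v, hm'v2,
      by omega, G1', hcov⟩
  · push_neg at hcov
    obtain ⟨i, hv2i, hit, hbad⟩ := hcov
    have hB'i : ∀ x ∈ B', x < i := by
      by_contra hcon
      push_neg at hcon
      obtain ⟨x, hxB', hxi⟩ := hcon
      have hiB' : i ∈ B' :=
        (edge_basic h𝕀 hB'𝕀).2.2 _ _ (sInf_mem_of_ne ⟨β, hβB'⟩) hxB' i (by omega) hxi
      obtain ⟨y, hy, hty⟩ := hbad B' hB'𝕀 hiB' hsB'm (by omega)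
      exact absurd (hB't y hy) (by omega)
    have hβi : β < i := hB'i β hβB'
    exact ih i hit K' F2 B' hK' hF2 hB'𝕀
      (mem_edge_between h𝕀 hK' htK' (by rw [hK'm]; omega) (le_of_lt hit))
      (mem_edge_between h𝕀 hF2 htF2 (by rw [hF2v]; omega) (le_of_lt hit))
      (by rw [hK'm, hF2v]; omega) (by rw [hF2v]; omega)
      ⟨β, hβB', by rw [hF2v]; omega⟩ hB'i
end Part1

section Part1b

variable {n : ℕ} {𝕀 : Finset (Finset ℕ)}

/-- Starting configuration from a non-distributivity witness with `min I < min J`. -/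
lemma start_conf (h𝕀 : IsIntervalHypergraph n 𝕀) (hcl : ClosedUnderIntersection 𝕀)
    {I J Kb : Finset ℕ} (hI : I ∈ 𝕀) (hJ : J ∈ 𝕀) (hKb : Kb ∈ 𝕀)
    (hJI : ¬J ⊆ I) (hSne : (I ∩ J).Nonempty) (hsub : I ∩ J ⊆ Kb)
    (hij : sInf (I : Set ℕ) < sInf (J : Set ℕ))
    (hminne0 : ¬((I ∩ J).min = Kb.min)) (hmaxne0 : ¬((I ∩ J).max = Kb.max)) :
    ∃ (t' m' v2' : ℕ) (K' F' : Finset ℕ), K' ∈ 𝕀 ∧ F' ∈ 𝕀 ∧ t' ∈ K' ∧ t' ∈ F' ∧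
      sInf (K' : Set ℕ) = m' ∧ sInf (F' : Set ℕ) = v2' ∧ m' < v2' ∧ v2' < t' ∧
      (∀ H ∈ 𝕀, t' ∈ H → ¬(m' < sInf (H : Set ℕ) ∧ sInf (H : Set ℕ) < v2')) ∧
      (∀ i, v2' ≤ i → i < t' → ∃ H ∈ 𝕀, i ∈ H ∧ m' ≤ sInf (H : Set ℕ) ∧
        sInf (H : Set ℕ) < i ∧ ∀ x ∈ H, x < t') := by
  have hminne : sInf ((I ∩ J : Finset ℕ) : Set ℕ) ≠ sInf (Kb : Set ℕ) := by
    intro h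
    exact hminne0 (by rw [min_coe_eq hSne, min_coe_eq (hSne.mono hsub), h])
  have hmaxne : (I ∩ J).max' hSne ≠ Kb.max' (hSne.mono hsub) := by
    intro h
    exact hmaxne0 (by rw [max_coe_eq hSne, max_coe_eq (hSne.mono hsub), h])
  have hIne : I.Nonempty := (edge_basic h𝕀 hI).1
  have hJne : J.Nonempty := (edge_basic h𝕀 hJ).1
  have hKne : Kb.Nonempty := hSne.mono hsub
  set i1 := sInf (I : Set ℕ) with hi1
  set j1 := sInf (J : Set ℕ) with hj1
  set i2 := I.max' hIne with hi2
  set j2 := J.max' hJne with hj2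
  set c := sInf (Kb : Set ℕ) with hc
  set d := Kb.max' hKne with hd
  obtain ⟨s, hs⟩ := id hSne
  have hsI : s ∈ I := (Finset.mem_inter.mp hs).1
  have hsJ : s ∈ J := (Finset.mem_inter.mp hs).2
  have hj1s : j1 ≤ s := sInf_le_of_mem hsJ
  have hsi2 : s ≤ i2 := Finset.le_max' I s hsI
  have hj1I : j1 ∈ I := mem_edge_between h𝕀 hI hsI (by omega) hj1s
  have hj1S : j1 ∈ I ∩ J := Finset.mem_inter.mpr ⟨hj1I, sInf_mem_of_ne hJne⟩
  have hsS : sInf ((I ∩ J : Finset ℕ) : Set ℕ) = j1 :=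
    sInf_coe_eq hj1S (fun x hx => sInf_le_of_mem (Finset.mem_inter.mp hx).2)
  have hj1i2 : j1 ≤ i2 := le_trans hj1s hsi2
  have hi2j2 : i2 < j2 := by
    by_contra hcon
    push_neg at hcon
    refine hJI (fun x hx => ?_)
    exact mem_edge_between h𝕀 hI (I.max'_mem hIne) (by have := sInf_le_of_mem hx; omega)
      (le_trans (Finset.le_max' J x hx) hcon)
  have hi2J : i2 ∈ J := mem_edge_between h𝕀 hJ (J.max'_mem hJne) hj1i2 (le_of_lt hi2j2)
  have hi2S : i2 ∈ I ∩ J := Finset.mem_inter.mpr ⟨I.max'_mem hIne, hi2J⟩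
  have hmaxS : (I ∩ J).max' hSne = i2 :=
    le_antisymm (Finset.max'_le _ _ _ (fun x hx => Finset.le_max' I x (Finset.mem_inter.mp hx).1))
      (Finset.le_max' _ _ hi2S)
  have hcj1 : c < j1 := by
    have h1 : c ≤ j1 := sInf_le_of_mem (hsub hj1S)
    have h2 : j1 ≠ c := by rw [hsS] at hminne; exact hminne
    omega
  have hi2d : i2 < d := by
    have h1 : i2 ≤ d := Finset.le_max' _ _ (hsub hi2S)
    have h2 : i2 ≠ d := by rw [hmaxS] at hmaxne; exact hmaxne
    omega
  set t0 := min j2 d with ht0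
  have hj1t0 : j1 ≤ t0 := le_min (by omega) (by omega)
  have ht0d : t0 ≤ d := min_le_right _ _
  have ht0Kb : t0 ∈ Kb :=
    mem_edge_between h𝕀 hKb (Kb.max'_mem hKne) (by omega) ht0d
  have ht0J : t0 ∈ J :=
    mem_edge_between h𝕀 hJ (J.max'_mem hJne) hj1t0 (min_le_left _ _)
  have hJK𝕀 : J ∩ Kb ∈ 𝕀 := hcl J hJ Kb hKb ⟨s, Finset.mem_inter.mpr ⟨hsJ, hsub hs⟩⟩
  have hIK𝕀 : I ∩ Kb ∈ 𝕀 := hcl I hI Kb hKb ⟨s, Finset.mem_inter.mpr ⟨hsI, hsub hs⟩⟩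
  have hj1Kb : j1 ∈ Kb :=
    mem_edge_between h𝕀 hKb (Kb.max'_mem hKne) (by omega) (by omega)
  have hsJK : sInf ((J ∩ Kb : Finset ℕ) : Set ℕ) = j1 :=
    sInf_coe_eq (Finset.mem_inter.mpr ⟨sInf_mem_of_ne hJne, hj1Kb⟩)
      (fun x hx => sInf_le_of_mem (Finset.mem_inter.mp hx).1)
  set x1 := max i1 c with hx1
  have hx1j1 : x1 < j1 := max_lt hij hcj1
  have hx1I : x1 ∈ I :=
    mem_edge_between h𝕀 hI (I.max'_mem hIne) (le_max_left _ _) (by omega)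
  have hx1Kb : x1 ∈ Kb :=
    mem_edge_between h𝕀 hKb (Kb.max'_mem hKne) (le_max_right _ _) (by omega)
  have hi2Kb : i2 ∈ Kb :=
    mem_edge_between h𝕀 hKb (Kb.max'_mem hKne) (by omega) (by omega)
  refine conf_rec h𝕀 hcl t0 Kb (J ∩ Kb) (I ∩ Kb) hKb hJK𝕀 hIK𝕀 ht0Kb
    (Finset.mem_inter.mpr ⟨ht0J, ht0Kb⟩) (by rw [hsJK]; omega) ?_ ?_ ?_
  · rw [hsJK]
    exact lt_of_le_of_lt (sInf_le_of_mem (Finset.mem_inter.mpr ⟨hx1I, hx1Kb⟩)) hx1j1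
  · exact ⟨i2, Finset.mem_inter.mpr ⟨I.max'_mem hIne, hi2Kb⟩, by rw [hsJK]; omega⟩
  · intro x hx
    have := Finset.le_max' I x (Finset.mem_inter.mp hx).1
    omega

end Part1b

/-- If an interval hypergraph `𝕀` is closed under intersection but
not distributive, then there is a join irreducible acyclic orientation `A` of `𝕀`
with `A ≰ A_j` for all `j ∈ 𝒥_𝕀`. -/
theorem stmt17 (n : ℕ) (hn : 1 ≤ n) (𝕀 : Finset (Finset ℕ))
    (h𝕀 : IsIntervalHypergraph n 𝕀) (hcl : ClosedUnderIntersection 𝕀)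
    (hnd : ¬IsDistribHG 𝕀)
    (Jf : ℕ → Finset ℕ) (μ : ℕ → ℕ) (Af : ℕ → Edge 𝕀 → ℕ)
    (hfam : ∀ j, InJI 𝕀 j →
      IsJj 𝕀 j (Jf j) ∧ IsLeast ((Jf j : Finset ℕ) : Set ℕ) (μ j) ∧ IsAj 𝕀 j (μ j) (Af j)) :
    ∃ A, AcycOr 𝕀 A ∧
      (¬∀ B, AcycOr 𝕀 B → leP n 𝕀 A B) ∧
      (∃! B, AcycOr 𝕀 B ∧ CoversP n 𝕀 B A) ∧
      ∀ j, InJI 𝕀 j → ¬leP n 𝕀 A (Af j) := by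
  classical
  unfold IsDistribHG at hnd
  push_neg at hnd
  obtain ⟨I, hI, J, hJ, hIJ, hJI, hSne, hrest⟩ := hnd
  have hS𝕀 : I ∩ J ∈ 𝕀 := hcl I hI J hJ hSne
  obtain ⟨Kb, hKb, hsub, hmins, hmaxs⟩ := hrest hS𝕀
  have hIne : I.Nonempty := (edge_basic h𝕀 hI).1
  have hJne : J.Nonempty := (edge_basic h𝕀 hJ).1
  have hdata : ∃ (t' m' v2' : ℕ) (K' F' : Finset ℕ), K' ∈ 𝕀 ∧ F' ∈ 𝕀 ∧ t' ∈ K' ∧ t' ∈ F' ∧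
      sInf (K' : Set ℕ) = m' ∧ sInf (F' : Set ℕ) = v2' ∧ m' < v2' ∧ v2' < t' ∧
      (∀ H ∈ 𝕀, t' ∈ H → ¬(m' < sInf (H : Set ℕ) ∧ sInf (H : Set ℕ) < v2')) ∧
      (∀ i, v2' ≤ i → i < t' → ∃ H ∈ 𝕀, i ∈ H ∧ m' ≤ sInf (H : Set ℕ) ∧
        sInf (H : Set ℕ) < i ∧ ∀ x ∈ H, x < t') := by
    rcases lt_trichotomy (sInf (I : Set ℕ)) (sInf (J : Set ℕ)) with h | h | h
    · exact start_conf h𝕀 hcl hI hJ hKb hJI hSne hsub h hmins hmaxs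
    · exfalso
      by_cases hm : I.max' hIne ≤ J.max' hJne
      · refine hIJ (fun x hx => ?_)
        exact mem_edge_between h𝕀 hJ (J.max'_mem hJne)
          (by rw [← h]; exact sInf_le_of_mem hx)
          (le_trans (Finset.le_max' I x hx) hm)
      · push_neg at hm
        refine hJI (fun x hx => ?_)
        exact mem_edge_between h𝕀 hI (I.max'_mem hIne)
          (by rw [h]; exact sInf_le_of_mem hx)
          (le_trans (Finset.le_max' J x hx) (le_of_lt hm))
    · refine start_conf h𝕀 hcl hJ hI hKb hIJ ?_ ?_ h ?_ ?_
      · rwa [Finset.inter_comm]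
      · rwa [Finset.inter_comm]
      · rw [Finset.inter_comm]; exact hmins
      · rw [Finset.inter_comm]; exact hmaxs
  obtain ⟨t, m, v2, K, F, hK, hF, htK, htF, hKm, hFv, hmv, hvt, G1, G2⟩ := hdata
  obtain ⟨A, h1, h2, h3, h4⟩ := core_main h𝕀 hK hF htK htF hKm hFv hmv hvt G1 G2
  exact ⟨A, h1, h2, h3, fun j hj => h4 j (μ j) (Af j) (hfam j hj).2.2⟩
end IHL
end
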